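/- arXiv:2605.09157 — 2 statements merged into one kernel-verified Lean document; each statement's English description precedes it below -/
import Mathlib

section
/- Let r : ℝ → ℝ be continuously differentiable with r and its derivative r′ bounded, let α ≥ 0, and adopt the curve setup. Define J(t) = ∫ (r(a) − α·log m_t(a))·m_t(a) da. Then J is differentiable, and for every t₀ ∈ ℝ: for every ε ∈ ℝ the map t ↦ Σ_{k=1}^N w_k(t)·( r(f_k(t, ε)) − α·log m_t(f_k(t, ε)) ) is differentiable at t₀, and J′(t₀) = ∫ [ (d/dt Σ_{k=1}^N w_k(t)·( r(f_k(t, ε)) − α·log m_t(f_k(t, ε)) ))|_{t = t₀} ]·φ(ε; 0, 1) dε. -/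
open MeasureTheory Real

/-- Gaussian density `φ(a; μ, σ) = (2πσ²)^(−1/2) · exp(−(a−μ)²/(2σ²))`. -/
noncomputable def gpdf (μ σ a : ℝ) : ℝ :=
  (Real.sqrt (2 * Real.pi * σ ^ 2))⁻¹ * Real.exp (-((a - μ) ^ 2) / (2 * σ ^ 2))

/-- Gaussian mixture density along a parameter curve:
`m_t(a) = Σ_k w_k(t) · φ(a; μ_k(t), σ_k(t))`. -/
noncomputable def mcurve {N : ℕ} (μc σc wc : Fin N → ℝ → ℝ) (t a : ℝ) : ℝ :=
  ∑ k, wc k t * gpdf (μc k t) (σc k t) a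

set_option linter.unusedSectionVars false

namespace S8

lemma sqrt2pi_pos : 0 < Real.sqrt (2 * Real.pi) := Real.sqrt_pos.2 (by positivity)

lemma sqrt2pi_le : Real.sqrt (2 * Real.pi) ≤ 3 := by
  rw [show (3:ℝ) = Real.sqrt 9 by rw [show (9:ℝ) = 3^2 by norm_num, Real.sqrt_sq]; norm_num]
  apply Real.sqrt_le_sqrt
  nlinarith [Real.pi_lt_d2]

lemma one_le_sqrt2pi : 1 ≤ Real.sqrt (2 * Real.pi) := by
  rw [show (1:ℝ) = Real.sqrt 1 by simp]
  apply Real.sqrt_le_sqrt; nlinarith [Real.pi_gt_three]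

lemma gpdf_eq {σ : ℝ} (hσ : 0 < σ) (μ a : ℝ) :
    gpdf μ σ a = (σ * Real.sqrt (2 * Real.pi))⁻¹ * Real.exp (-((a - μ) ^ 2) / (2 * σ ^ 2)) := by
  unfold gpdf
  rw [show 2 * Real.pi * σ ^ 2 = σ ^ 2 * (2 * Real.pi) by ring,
    Real.sqrt_mul (sq_nonneg σ), Real.sqrt_sq hσ.le]

lemma gpdf_pos {σ : ℝ} (hσ : 0 < σ) (μ a : ℝ) : 0 < gpdf μ σ a := by
  rw [gpdf_eq hσ]
  have := sqrt2pi_pos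
  positivity

lemma gpdf_le {σ : ℝ} (hσ : 0 < σ) (μ a : ℝ) :
    gpdf μ σ a ≤ (σ * Real.sqrt (2 * Real.pi))⁻¹ := by
  rw [gpdf_eq hσ]
  have h1 : Real.exp (-((a - μ) ^ 2) / (2 * σ ^ 2)) ≤ 1 := by
    rw [Real.exp_le_one_iff]
    exact div_nonpos_of_nonpos_of_nonneg (neg_nonpos.mpr (sq_nonneg _)) (by positivity)
  have h2 : (0:ℝ) < (σ * Real.sqrt (2 * Real.pi))⁻¹ := by
    have := sqrt2pi_pos; positivity
  calc (σ * Real.sqrt (2 * Real.pi))⁻¹ * Real.exp (-((a - μ) ^ 2) / (2 * σ ^ 2))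
      ≤ (σ * Real.sqrt (2 * Real.pi))⁻¹ * 1 := by gcongr
    _ = _ := mul_one _

lemma gpdf_affine {σ : ℝ} (hσ : 0 < σ) (μ ε : ℝ) :
    gpdf μ σ (μ + σ * ε) = σ⁻¹ * gpdf 0 1 ε := by
  rw [gpdf_eq hσ, gpdf_eq one_pos]
  have : (μ + σ * ε - μ) ^ 2 / (2 * σ ^ 2) = ε ^ 2 / (2 * 1 ^ 2) := by
    field_simp; ring
  rw [show -((μ + σ * ε - μ) ^ 2) / (2 * σ ^ 2) = -((μ + σ * ε - μ) ^ 2 / (2 * σ ^ 2)) by ring,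
    this]
  rw [mul_inv]
  ring_nf

lemma gpdf01_eq (ε : ℝ) :
    gpdf 0 1 ε = (Real.sqrt (2 * Real.pi))⁻¹ * Real.exp (-(ε ^ 2) / 2) := by
  rw [gpdf_eq one_pos]; norm_num

lemma continuous_gpdf (μ σ : ℝ) : Continuous (gpdf μ σ) := by
  unfold gpdf; fun_prop

/-- logarithmic derivative coefficient of a Gaussian along a curve -/
noncomputable def Dcoef (u u' s s' b b' : ℝ) : ℝ :=
  -(s' / s) - (b - u) * (b' - u') / s ^ 2 + (b - u) ^ 2 * s' / s ^ 3

lemma hasDerivAt_gpdf_comp {u s b : ℝ → ℝ} {u' s' b' t : ℝ}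
    (hu : HasDerivAt u u' t) (hs : HasDerivAt s s' t) (hb : HasDerivAt b b' t)
    (hspos : ∀ x, 0 < s x) :
    HasDerivAt (fun x => gpdf (u x) (s x) (b x))
      (gpdf (u t) (s t) (b t) * Dcoef (u t) u' (s t) s' (b t) b') t := by
  have hfun : (fun x => gpdf (u x) (s x) (b x))
      = fun x => (s x * Real.sqrt (2 * Real.pi))⁻¹ *
          Real.exp (-((b x - u x) ^ 2) / (2 * (s x) ^ 2)) := by
    funext x; exact gpdf_eq (hspos x) _ _
  rw [hfun]
  have hst := hspos t
  have h2pi := sqrt2pi_pos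
  have h1 : HasDerivAt (fun x => (s x * Real.sqrt (2 * Real.pi))⁻¹)
      (-(s' * Real.sqrt (2 * Real.pi)) / (s t * Real.sqrt (2 * Real.pi)) ^ 2) t :=
    (hs.mul_const _).inv (by positivity)
  have hnum : HasDerivAt (fun x => -((b x - u x) ^ 2))
      (-(2 * (b t - u t) ^ 1 * (b' - u'))) t := ((hb.sub hu).pow 2).neg
  have hden : HasDerivAt (fun x => 2 * (s x) ^ 2) (2 * (2 * (s t) ^ 1 * s')) t :=
    (hs.pow 2).const_mul 2
  have h2 : HasDerivAt (fun x => -((b x - u x) ^ 2) / (2 * (s x) ^ 2))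
      ((-(2 * (b t - u t) ^ 1 * (b' - u')) * (2 * (s t) ^ 2)
        - -((b t - u t) ^ 2) * (2 * (2 * (s t) ^ 1 * s'))) / (2 * (s t) ^ 2) ^ 2) t :=
    hnum.div hden (by positivity)
  have h3 := h1.fun_mul h2.exp
  refine h3.congr_deriv ?_
  rw [gpdf_eq hst]
  unfold Dcoef
  field_simp
  ring


lemma Dcoef_bound {B s s' u u' b b' ε : ℝ} (hB : 1 ≤ B) (hsl : B⁻¹ ≤ s) (hs' : |s'| ≤ B)
    (hbu : |b - u| ≤ 3 * B * (1 + |ε|)) (hb'u : |b' - u'| ≤ 3 * B * (1 + |ε|)) :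
    |Dcoef u u' s s' b b'| ≤ 37 * B ^ 6 * (1 + ε ^ 2) := by
  have hB0 : (0:ℝ) < B := lt_of_lt_of_le zero_lt_one hB
  have hs : 0 < s := lt_of_lt_of_le (by positivity) hsl
  have hinv : s⁻¹ ≤ B := by
    have := inv_anti₀ (by positivity : (0:ℝ) < B⁻¹) hsl
    rwa [inv_inv] at this
  have hinv0 : (0:ℝ) ≤ s⁻¹ := by positivity
  have hq0 : (0:ℝ) ≤ 1 + ε ^ 2 := by positivity
  have hq1 : (1:ℝ) ≤ 1 + ε ^ 2 := by nlinarith [sq_nonneg ε]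
  have h2q : (1 + |ε|) ^ 2 ≤ 2 * (1 + ε ^ 2) := by
    nlinarith [sq_nonneg (|ε| - 1), sq_abs ε, abs_nonneg ε]
  have hsq : |b - u| * |b' - u'| ≤ 18 * B ^ 2 * (1 + ε ^ 2) := by
    have m1 : |b - u| * |b' - u'| ≤ (3 * B * (1 + |ε|)) * (3 * B * (1 + |ε|)) :=
      mul_le_mul hbu hb'u (abs_nonneg _) (by positivity)
    nlinarith [mul_le_mul_of_nonneg_left h2q (by positivity : (0:ℝ) ≤ 9 * B ^ 2)]
  have hsq2 : (b - u) ^ 2 ≤ 18 * B ^ 2 * (1 + ε ^ 2) := by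
    have m1 : |b - u| * |b - u| ≤ (3 * B * (1 + |ε|)) * (3 * B * (1 + |ε|)) :=
      mul_le_mul hbu hbu (abs_nonneg _) (by positivity)
    rw [abs_mul_abs_self (b - u)] at m1
    nlinarith [mul_le_mul_of_nonneg_left h2q (by positivity : (0:ℝ) ≤ 9 * B ^ 2), sq_nonneg (b-u)]
  have A1 : |s' / s| ≤ B ^ 2 := by
    rw [abs_div, abs_of_pos hs, div_eq_mul_inv]
    calc |s'| * s⁻¹ ≤ B * B := mul_le_mul hs' hinv hinv0 hB0.le
      _ = B ^ 2 := by ring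
  have A2 : |(b - u) * (b' - u') / s ^ 2| ≤ 18 * B ^ 4 * (1 + ε ^ 2) := by
    rw [abs_div, abs_mul, abs_of_pos (by positivity : (0:ℝ) < s ^ 2), div_eq_mul_inv,
      ← inv_pow]
    calc |b - u| * |b' - u'| * (s⁻¹) ^ 2
        ≤ (18 * B ^ 2 * (1 + ε ^ 2)) * B ^ 2 := by
          apply mul_le_mul hsq (pow_le_pow_left₀ hinv0 hinv 2) (by positivity) (by positivity)
      _ = 18 * B ^ 4 * (1 + ε ^ 2) := by ring
  have A3 : |(b - u) ^ 2 * s' / s ^ 3| ≤ 18 * B ^ 6 * (1 + ε ^ 2) := by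
    rw [abs_div, abs_mul, abs_of_pos (by positivity : (0:ℝ) < s ^ 3), div_eq_mul_inv,
      ← inv_pow, abs_pow, sq_abs]
    calc (b - u) ^ 2 * |s'| * (s⁻¹) ^ 3
        ≤ (18 * B ^ 2 * (1 + ε ^ 2)) * B * B ^ 3 := by
          apply mul_le_mul (mul_le_mul hsq2 hs' (abs_nonneg _) (by positivity))
            (pow_le_pow_left₀ hinv0 hinv 3) (by positivity) (by positivity)
      _ = 18 * B ^ 6 * (1 + ε ^ 2) := by ring
  have tri : |Dcoef u u' s s' b b'| ≤ |s' / s| + |(b - u) * (b' - u') / s ^ 2|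
      + |(b - u) ^ 2 * s' / s ^ 3| := by
    unfold Dcoef
    calc |-(s' / s) - (b - u) * (b' - u') / s ^ 2 + (b - u) ^ 2 * s' / s ^ 3|
        ≤ |-(s' / s) - (b - u) * (b' - u') / s ^ 2| + |(b - u) ^ 2 * s' / s ^ 3| := abs_add_le _ _
      _ ≤ |-(s' / s)| + |(b - u) * (b' - u') / s ^ 2| + |(b - u) ^ 2 * s' / s ^ 3| := by
          linarith [abs_sub (-(s' / s)) ((b - u) * (b' - u') / s ^ 2)]
      _ = _ := by rw [abs_neg]
  have e1 : B ^ 2 ≤ B ^ 6 := pow_le_pow_right₀ hB (by norm_num)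
  have e2 : B ^ 4 ≤ B ^ 6 := pow_le_pow_right₀ hB (by norm_num)
  nlinarith [mul_le_mul_of_nonneg_right e2 hq0, mul_le_mul_of_nonneg_right e1 hq0,
    mul_le_mul_of_nonneg_left hq1 (by positivity : (0:ℝ) ≤ B ^ 6)]


variable {N : ℕ} {μc σc wc : Fin N → ℝ → ℝ}

lemma mcurve_pos (hN : 1 ≤ N) (hσpos : ∀ k t, 0 < σc k t) (hwpos : ∀ k t, 0 < wc k t)
    (t a : ℝ) : 0 < mcurve μc σc wc t a := by
  have : Nonempty (Fin N) := ⟨⟨0, hN⟩⟩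
  exact Finset.sum_pos (fun k _ => mul_pos (hwpos k t) (gpdf_pos (hσpos k t) _ _))
    Finset.univ_nonempty

lemma le_mcurve (hσpos : ∀ k t, 0 < σc k t) (hwpos : ∀ k t, 0 < wc k t) (k : Fin N)
    (t a : ℝ) : wc k t * gpdf (μc k t) (σc k t) a ≤ mcurve μc σc wc t a := by
  unfold mcurve
  exact Finset.single_le_sum (f := fun j => wc j t * gpdf (μc j t) (σc j t) a)
    (fun j _ => le_of_lt (mul_pos (hwpos j t) (gpdf_pos (hσpos j t) _ _)))
    (Finset.mem_univ k)

/-- t-derivative of `mcurve` along a moving point `b` with velocity `b'`. -/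
noncomputable def mD (μc σc wc : Fin N → ℝ → ℝ) (t b b' : ℝ) : ℝ :=
  ∑ j, (deriv (wc j) t * gpdf (μc j t) (σc j t) b
    + wc j t * (gpdf (μc j t) (σc j t) b *
        Dcoef (μc j t) (deriv (μc j) t) (σc j t) (deriv (σc j) t) b b'))

/-- t-derivative of the reparameterized integrand. -/
noncomputable def PhiD (μc σc wc : Fin N → ℝ → ℝ) (r : ℝ → ℝ) (α t ε : ℝ) : ℝ :=
  ∑ k,
    (deriv (wc k) t * (r (μc k t + σc k t * ε)
        - α * Real.log (mcurve μc σc wc t (μc k t + σc k t * ε)))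
     + wc k t * (deriv r (μc k t + σc k t * ε) * (deriv (μc k) t + deriv (σc k) t * ε)
        - α * (mD μc σc wc t (μc k t + σc k t * ε) (deriv (μc k) t + deriv (σc k) t * ε)
                / mcurve μc σc wc t (μc k t + σc k t * ε))))

lemma hasDerivAt_mcurve_comp (hμ : ∀ k, ContDiff ℝ 1 (μc k)) (hσ : ∀ k, ContDiff ℝ 1 (σc k))
    (hw : ∀ k, ContDiff ℝ 1 (wc k)) (hσpos : ∀ k t, 0 < σc k t)
    {b : ℝ → ℝ} {b' t : ℝ} (hb : HasDerivAt b b' t) :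
    HasDerivAt (fun x => mcurve μc σc wc x (b x)) (mD μc σc wc t (b t) b') t := by
  unfold mcurve mD
  apply HasDerivAt.fun_sum
  intro j _
  exact (((hw j).differentiable one_ne_zero t).hasDerivAt).mul
    (hasDerivAt_gpdf_comp (((hμ j).differentiable one_ne_zero t).hasDerivAt)
      (((hσ j).differentiable one_ne_zero t).hasDerivAt) hb (hσpos j))

lemma hasDerivAt_Phi (hN : 1 ≤ N)
    (hμ : ∀ k, ContDiff ℝ 1 (μc k)) (hσ : ∀ k, ContDiff ℝ 1 (σc k))
    (hw : ∀ k, ContDiff ℝ 1 (wc k)) (hσpos : ∀ k t, 0 < σc k t)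
    (hwpos : ∀ k t, 0 < wc k t) {r : ℝ → ℝ} (hr : ContDiff ℝ 1 r) (α : ℝ) (t ε : ℝ) :
    HasDerivAt (fun x => ∑ k, wc k x *
        (r (μc k x + σc k x * ε)
          - α * Real.log (mcurve μc σc wc x (μc k x + σc k x * ε))))
      (PhiD μc σc wc r α t ε) t := by
  unfold PhiD
  apply HasDerivAt.fun_sum
  intro k _
  have hbk : HasDerivAt (fun x => μc k x + σc k x * ε)
      (deriv (μc k) t + deriv (σc k) t * ε) t :=
    (((hμ k).differentiable one_ne_zero t).hasDerivAt).add
      ((((hσ k).differentiable one_ne_zero t).hasDerivAt).mul_const ε)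
  have hrc : HasDerivAt (fun x => r (μc k x + σc k x * ε))
      (deriv r (μc k t + σc k t * ε) * (deriv (μc k) t + deriv (σc k) t * ε)) t :=
    (((hr.differentiable one_ne_zero) _).hasDerivAt).comp t hbk
  have hm := hasDerivAt_mcurve_comp hμ hσ hw hσpos hbk
  have hlog : HasDerivAt
      (fun x => Real.log (mcurve μc σc wc x (μc k x + σc k x * ε)))
      (mD μc σc wc t (μc k t + σc k t * ε) (deriv (μc k) t + deriv (σc k) t * ε)
        / mcurve μc σc wc t (μc k t + σc k t * ε)) t :=
    hm.log (ne_of_gt (mcurve_pos hN hσpos hwpos _ _))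
  exact (((hw k).differentiable one_ne_zero t).hasDerivAt).mul (hrc.sub (hlog.const_mul α))

lemma exists_bound (hμ : ∀ k, ContDiff ℝ 1 (μc k)) (hσ : ∀ k, ContDiff ℝ 1 (σc k))
    (hw : ∀ k, ContDiff ℝ 1 (wc k)) (hσpos : ∀ k t, 0 < σc k t)
    (hwpos : ∀ k t, 0 < wc k t) (t₀ : ℝ) :
    ∃ B : ℝ, 1 ≤ B ∧ ∀ k, ∀ t ∈ Set.Icc (t₀ - 1) (t₀ + 1),
      |μc k t| ≤ B ∧ σc k t ≤ B ∧ |deriv (μc k) t| ≤ B ∧ |deriv (σc k) t| ≤ B ∧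
      |deriv (wc k) t| ≤ B ∧ B⁻¹ ≤ σc k t ∧ B⁻¹ ≤ wc k t := by
  set I := Set.Icc (t₀ - 1) (t₀ + 1) with hI
  have hIc : IsCompact I := isCompact_Icc
  have hIne : I.Nonempty := ⟨t₀, by constructor <;> linarith⟩
  have bdd : ∀ g : ℝ → ℝ, Continuous g → ∃ M : ℝ, ∀ t ∈ I, |g t| ≤ M := by
    intro g hg
    exact hIc.exists_bound_of_continuousOn hg.continuousOn
  have lb : ∀ g : ℝ → ℝ, Continuous g → (∀ t, 0 < g t) →
      ∃ c : ℝ, 0 < c ∧ ∀ t ∈ I, c ≤ g t := by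
    intro g hg hgp
    obtain ⟨x, hxI, hmin⟩ := hIc.exists_isMinOn hIne hg.continuousOn
    exact ⟨g x, hgp x, fun t ht => hmin ht⟩
  have hk : ∀ k : Fin N, ∃ Bk : ℝ, 1 ≤ Bk ∧ ∀ t ∈ I,
      |μc k t| ≤ Bk ∧ σc k t ≤ Bk ∧ |deriv (μc k) t| ≤ Bk ∧ |deriv (σc k) t| ≤ Bk ∧
      |deriv (wc k) t| ≤ Bk ∧ Bk⁻¹ ≤ σc k t ∧ Bk⁻¹ ≤ wc k t := by
    intro k
    obtain ⟨M1, hM1⟩ := bdd _ (hμ k).continuous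
    obtain ⟨M2, hM2⟩ := bdd _ (hσ k).continuous
    obtain ⟨M3, hM3⟩ := bdd _ ((hμ k).continuous_deriv le_rfl)
    obtain ⟨M4, hM4⟩ := bdd _ ((hσ k).continuous_deriv le_rfl)
    obtain ⟨M5, hM5⟩ := bdd _ ((hw k).continuous_deriv le_rfl)
    obtain ⟨c1, hc1p, hc1⟩ := lb _ (hσ k).continuous (hσpos k)
    obtain ⟨c2, hc2p, hc2⟩ := lb _ (hw k).continuous (hwpos k)
    refine ⟨1 + |M1| + |M2| + |M3| + |M4| + |M5| + c1⁻¹ + c2⁻¹, ?_, ?_⟩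
    · have := abs_nonneg M1; have := abs_nonneg M2; have := abs_nonneg M3
      have := abs_nonneg M4; have := abs_nonneg M5
      have : 0 < c1⁻¹ := by positivity
      have : 0 < c2⁻¹ := by positivity
      linarith [abs_nonneg M1, abs_nonneg M2, abs_nonneg M3, abs_nonneg M4, abs_nonneg M5]
    · intro t ht
      have h1 := hM1 t ht; have h2 := hM2 t ht; have h3 := hM3 t ht
      have h4 := hM4 t ht; have h5 := hM5 t ht
      have hc1t := hc1 t ht; have hc2t := hc2 t ht
      have hi1 : (0:ℝ) < c1⁻¹ := by positivity
      have hi2 : (0:ℝ) < c2⁻¹ := by positivity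
      have habs : ∀ x M : ℝ, |x| ≤ M → |x| ≤ |M| := fun x M h => h.trans (le_abs_self M)
      refine ⟨?_, ?_, ?_, ?_, ?_, ?_, ?_⟩
      · have := habs _ _ h1
        linarith [abs_nonneg M2, abs_nonneg M3, abs_nonneg M4, abs_nonneg M5]
      · have := (le_abs_self (σc k t)).trans (habs _ _ h2)
        linarith [abs_nonneg M1, abs_nonneg M3, abs_nonneg M4, abs_nonneg M5]
      · have := habs _ _ h3
        linarith [abs_nonneg M1, abs_nonneg M2, abs_nonneg M4, abs_nonneg M5]
      · have := habs _ _ h4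
        linarith [abs_nonneg M1, abs_nonneg M2, abs_nonneg M3, abs_nonneg M5]
      · have := habs _ _ h5
        linarith [abs_nonneg M1, abs_nonneg M2, abs_nonneg M3, abs_nonneg M4]
      · have hB : c1⁻¹ ≤ 1 + |M1| + |M2| + |M3| + |M4| + |M5| + c1⁻¹ + c2⁻¹ := by
          linarith [abs_nonneg M1, abs_nonneg M2, abs_nonneg M3, abs_nonneg M4, abs_nonneg M5]
        exact le_trans ((inv_anti₀ hi1 hB).trans (le_of_eq (inv_inv c1))) hc1t
      · have hB : c2⁻¹ ≤ 1 + |M1| + |M2| + |M3| + |M4| + |M5| + c1⁻¹ + c2⁻¹ := by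
          linarith [abs_nonneg M1, abs_nonneg M2, abs_nonneg M3, abs_nonneg M4, abs_nonneg M5]
        exact le_trans ((inv_anti₀ hi2 hB).trans (le_of_eq (inv_inv c2))) hc2t
  choose Bf hBf1 hBf2 using hk
  refine ⟨1 + ∑ k, Bf k, ?_, ?_⟩
  · have : ∀ k ∈ Finset.univ, (0:ℝ) ≤ Bf k := fun k _ => le_trans zero_le_one (hBf1 k)
    have := Finset.sum_nonneg this
    linarith
  · intro k t ht
    have hle : Bf k ≤ 1 + ∑ j, Bf j := by
      have h1 : Bf k ≤ ∑ j, Bf j :=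
        Finset.single_le_sum (fun j _ => le_trans zero_le_one (hBf1 j)) (Finset.mem_univ k)
      linarith
    have hinv : (1 + ∑ j, Bf j)⁻¹ ≤ (Bf k)⁻¹ :=
      inv_anti₀ (lt_of_lt_of_le zero_lt_one (hBf1 k)) hle
    obtain ⟨p1, p2, p3, p4, p5, p6, p7⟩ := hBf2 k t ht
    exact ⟨p1.trans hle, p2.trans hle, p3.trans hle, p4.trans hle, p5.trans hle,
      hinv.trans p6, hinv.trans p7⟩


/-- hypothesis bundle for uniform bounds on the interval -/
def BProp (μc σc wc : Fin N → ℝ → ℝ) (t₀ B : ℝ) : Prop :=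
  1 ≤ B ∧ ∀ k, ∀ t ∈ Set.Icc (t₀ - 1) (t₀ + 1),
    |μc k t| ≤ B ∧ σc k t ≤ B ∧ |deriv (μc k) t| ≤ B ∧ |deriv (σc k) t| ≤ B ∧
    |deriv (wc k) t| ≤ B ∧ B⁻¹ ≤ σc k t ∧ B⁻¹ ≤ wc k t

section bounds

variable (hN : 1 ≤ N) (hσpos : ∀ k t, 0 < σc k t) (hwpos : ∀ k t, 0 < wc k t)
  (hwsum : ∀ t, (∑ k, wc k t) = 1) {t₀ B : ℝ} (hB : BProp μc σc wc t₀ B)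
  {t : ℝ} (ht : t ∈ Set.Icc (t₀ - 1) (t₀ + 1)) (k : Fin N) (ε : ℝ)

include hB ht

lemma bdist (j : Fin N) :
    |μc k t + σc k t * ε - μc j t| ≤ 3 * B * (1 + |ε|) := by
  obtain ⟨hB1, hBp⟩ := hB
  obtain ⟨hμk, hσk, -, -, -, -, -⟩ := hBp k t ht
  obtain ⟨hμj, -, -, -, -, hσl, -⟩ := hBp j t ht
  have h0 : (0:ℝ) < B := lt_of_lt_of_le zero_lt_one hB1
  calc |μc k t + σc k t * ε - μc j t| ≤ |μc k t| + |σc k t| * |ε| + |μc j t| := by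
        rw [show μc k t + σc k t * ε - μc j t = (μc k t + σc k t * ε) + -(μc j t) by ring]
        refine (abs_add_le _ _).trans ?_
        rw [abs_neg]
        linarith [abs_add_le (μc k t) (σc k t * ε), le_of_eq (abs_mul (σc k t) ε)]
    _ ≤ B + B * |ε| + B := by
        have : |σc k t| ≤ B := by
          rw [abs_of_pos (lt_of_lt_of_le (by positivity) ((hBp k t ht).2.2.2.2.2.1))]
          exact hσk
        have he := abs_nonneg ε
        have := mul_le_mul_of_nonneg_right this he
        linarith
    _ ≤ 3 * B * (1 + |ε|) := by nlinarith [abs_nonneg ε]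

lemma bvel (j : Fin N) :
    |deriv (μc k) t + deriv (σc k) t * ε - deriv (μc j) t| ≤ 3 * B * (1 + |ε|) := by
  obtain ⟨hB1, hBp⟩ := hB
  obtain ⟨-, -, hμ'k, hσ'k, -, -, -⟩ := hBp k t ht
  obtain ⟨-, -, hμ'j, -, -, -, -⟩ := hBp j t ht
  have h0 : (0:ℝ) < B := lt_of_lt_of_le zero_lt_one hB1
  calc |deriv (μc k) t + deriv (σc k) t * ε - deriv (μc j) t|
      ≤ |deriv (μc k) t| + |deriv (σc k) t| * |ε| + |deriv (μc j) t| := by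
        rw [show deriv (μc k) t + deriv (σc k) t * ε - deriv (μc j) t
          = (deriv (μc k) t + deriv (σc k) t * ε) + -(deriv (μc j) t) by ring]
        refine (abs_add_le _ _).trans ?_
        rw [abs_neg]
        linarith [abs_add_le (deriv (μc k) t) (deriv (σc k) t * ε),
          le_of_eq (abs_mul (deriv (σc k) t) ε)]
    _ ≤ B + B * |ε| + B := by
        have he := abs_nonneg ε
        have := mul_le_mul_of_nonneg_right hσ'k he
        linarith
    _ ≤ 3 * B * (1 + |ε|) := by nlinarith [abs_nonneg ε]

include hN hσpos hwpos hwsum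

lemma mD_div_bound :
    |mD μc σc wc t (μc k t + σc k t * ε) (deriv (μc k) t + deriv (σc k) t * ε)
      / mcurve μc σc wc t (μc k t + σc k t * ε)| ≤ 38 * N * B ^ 7 * (1 + ε ^ 2) := by
  have hB1 := hB.1
  have hBp := hB.2
  have hB0 : (0:ℝ) < B := lt_of_lt_of_le zero_lt_one hB1
  set b := μc k t + σc k t * ε with hb
  set b' := deriv (μc k) t + deriv (σc k) t * ε with hb'
  have hm := mcurve_pos (μc := μc) hN hσpos hwpos t b
  have hq0 : (0:ℝ) ≤ 1 + ε ^ 2 := by positivity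
  have hq1 : (1:ℝ) ≤ 1 + ε ^ 2 := by nlinarith [sq_nonneg ε]
  -- bound each term of mD
  have hterm : ∀ j : Fin N,
      |deriv (wc j) t * gpdf (μc j t) (σc j t) b
        + wc j t * (gpdf (μc j t) (σc j t) b *
            Dcoef (μc j t) (deriv (μc j) t) (σc j t) (deriv (σc j) t) b b')|
      ≤ (38 * B ^ 6 * (1 + ε ^ 2)) * (B * mcurve μc σc wc t b) := by
    intro j
    obtain ⟨-, -, -, hσ'j, hw'j, hσlj, hwlj⟩ := hBp j t ht
    have hg := gpdf_pos (hσpos j t) (μc j t) b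
    have hD := Dcoef_bound hB1 hσlj hσ'j (bdist hB ht k ε j) (bvel hB ht k ε j)
    have hwj1 : wc j t ≤ 1 := by
      rw [← hwsum t]
      exact Finset.single_le_sum (fun i _ => (hwpos i t).le) (Finset.mem_univ j)
    have hgm : gpdf (μc j t) (σc j t) b ≤ B * mcurve μc σc wc t b := by
      have h1 : B⁻¹ * gpdf (μc j t) (σc j t) b ≤ mcurve μc σc wc t b :=
        le_trans (mul_le_mul_of_nonneg_right hwlj hg.le) (le_mcurve hσpos hwpos j t b)
      calc gpdf (μc j t) (σc j t) b = B * (B⁻¹ * gpdf (μc j t) (σc j t) b) := by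
            field_simp
        _ ≤ B * mcurve μc σc wc t b := mul_le_mul_of_nonneg_left h1 hB0.le
    calc |deriv (wc j) t * gpdf (μc j t) (σc j t) b
          + wc j t * (gpdf (μc j t) (σc j t) b *
              Dcoef (μc j t) (deriv (μc j) t) (σc j t) (deriv (σc j) t) b b')|
        ≤ |deriv (wc j) t| * gpdf (μc j t) (σc j t) b
          + wc j t * (gpdf (μc j t) (σc j t) b * |Dcoef (μc j t) (deriv (μc j) t) (σc j t)
              (deriv (σc j) t) b b'|) := by
          refine (abs_add_le _ _).trans ?_
          rw [abs_mul, abs_of_pos hg, abs_mul, abs_of_pos (hwpos j t), abs_mul,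
            abs_of_pos hg]
      _ ≤ B * gpdf (μc j t) (σc j t) b
          + 1 * (gpdf (μc j t) (σc j t) b * (37 * B ^ 6 * (1 + ε ^ 2))) := by
          gcongr
      _ = (B + 37 * B ^ 6 * (1 + ε ^ 2)) * gpdf (μc j t) (σc j t) b := by ring
      _ ≤ (38 * B ^ 6 * (1 + ε ^ 2)) * (B * mcurve μc σc wc t b) := by
          have h1 : B + 37 * B ^ 6 * (1 + ε ^ 2) ≤ 38 * B ^ 6 * (1 + ε ^ 2) := by
            nlinarith [pow_le_pow_right₀ hB1 (show 1 ≤ 6 by norm_num),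
              mul_le_mul_of_nonneg_left hq1 (by positivity : (0:ℝ) ≤ B ^ 6)]
          exact mul_le_mul h1 hgm hg.le (by positivity)
  have hsum : |mD μc σc wc t b b'| ≤
      N * ((38 * B ^ 6 * (1 + ε ^ 2)) * (B * mcurve μc σc wc t b)) := by
    unfold mD
    refine (Finset.abs_sum_le_sum_abs _ _).trans ?_
    have := Finset.sum_le_card_nsmul Finset.univ _ _ (fun j _ => hterm j)
    simpa [Finset.card_univ, nsmul_eq_mul] using this
  rw [abs_div, abs_of_pos hm, div_le_iff₀ hm]
  calc |mD μc σc wc t b b'| ≤ N * ((38 * B ^ 6 * (1 + ε ^ 2)) * (B * mcurve μc σc wc t b)) :=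
        hsum
    _ = 38 * N * B ^ 7 * (1 + ε ^ 2) * mcurve μc σc wc t b := by ring

lemma log_m_bound :
    |Real.log (mcurve μc σc wc t (μc k t + σc k t * ε))| ≤ (3 * B ^ 2 + 1) * (1 + ε ^ 2) := by
  obtain ⟨hB1, hBp⟩ := hB
  have hB0 : (0:ℝ) < B := lt_of_lt_of_le zero_lt_one hB1
  set b := μc k t + σc k t * ε with hbdef
  have hm := mcurve_pos (μc := μc) hN hσpos hwpos t b
  have hub : mcurve μc σc wc t b ≤ B := by
    unfold mcurve
    calc (∑ j, wc j t * gpdf (μc j t) (σc j t) b) ≤ ∑ j, wc j t * B := by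
          apply Finset.sum_le_sum
          intro j _
          apply mul_le_mul_of_nonneg_left _ (hwpos j t).le
          obtain ⟨-, -, -, -, -, hσlj, -⟩ := hBp j t ht
          refine (gpdf_le (hσpos j t) _ _).trans ?_
          rw [mul_inv]
          calc (σc j t)⁻¹ * (Real.sqrt (2 * Real.pi))⁻¹ ≤ B * 1 := by
                apply mul_le_mul _ _ (by positivity) hB0.le
                · have := inv_anti₀ (by positivity : (0:ℝ) < B⁻¹) hσlj
                  rwa [inv_inv] at this
                · rw [inv_le_one_iff₀]; right; exact one_le_sqrt2pi
            _ = B := mul_one B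
      _ = B := by rw [← Finset.sum_mul, hwsum t, one_mul]
  have hlb : (3 * B ^ 2)⁻¹ * Real.exp (-(ε ^ 2) / 2) ≤ mcurve μc σc wc t b := by
    obtain ⟨-, hσk, -, -, -, hσlk, hwlk⟩ := hBp k t ht
    have hσk0 := hσpos k t
    refine le_trans ?_ (le_mcurve hσpos hwpos k t b)
    rw [hbdef, gpdf_affine hσk0, gpdf01_eq]
    have h1 : (3 * B ^ 2)⁻¹ ≤ wc k t * ((σc k t)⁻¹ * (Real.sqrt (2 * Real.pi))⁻¹) := by
      have e1 : B⁻¹ ≤ (σc k t)⁻¹ := inv_anti₀ hσk0 hσk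
      have e2 : (3:ℝ)⁻¹ ≤ (Real.sqrt (2 * Real.pi))⁻¹ := by
        exact inv_anti₀ sqrt2pi_pos sqrt2pi_le
      calc (3 * B ^ 2)⁻¹ = B⁻¹ * (B⁻¹ * 3⁻¹) := by rw [← mul_inv, ← mul_inv]; ring_nf
        _ ≤ wc k t * ((σc k t)⁻¹ * (Real.sqrt (2 * Real.pi))⁻¹) := by
            apply mul_le_mul hwlk (mul_le_mul e1 e2 (by norm_num) (by positivity))
              (by positivity) (hwpos k t).le
    calc (3 * B ^ 2)⁻¹ * Real.exp (-(ε ^ 2) / 2)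
        ≤ (wc k t * ((σc k t)⁻¹ * (Real.sqrt (2 * Real.pi))⁻¹)) * Real.exp (-(ε ^ 2) / 2) :=
          mul_le_mul_of_nonneg_right h1 (Real.exp_pos _).le
      _ = wc k t * ((σc k t)⁻¹ * ((Real.sqrt (2 * Real.pi))⁻¹ * Real.exp (-(ε ^ 2) / 2))) := by
          ring
  rw [abs_le]
  constructor
  · -- lower bound on log
    have h1 : Real.log ((3 * B ^ 2)⁻¹ * Real.exp (-(ε ^ 2) / 2)) ≤
        Real.log (mcurve μc σc wc t b) :=
      Real.log_le_log (by positivity) hlb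
    have h2 : Real.log ((3 * B ^ 2)⁻¹ * Real.exp (-(ε ^ 2) / 2))
        = -Real.log (3 * B ^ 2) + -(ε ^ 2) / 2 := by
      rw [Real.log_mul (by positivity) (Real.exp_ne_zero _), Real.log_inv, Real.log_exp]
    have h3 : Real.log (3 * B ^ 2) ≤ 3 * B ^ 2 - 1 :=
      Real.log_le_sub_one_of_pos (by positivity)
    nlinarith [sq_nonneg ε, sq_nonneg B, sq_nonneg (ε * B)]
  · have h1 : Real.log (mcurve μc σc wc t b) ≤ Real.log B := Real.log_le_log hm hub
    have h2 : Real.log B ≤ B - 1 := Real.log_le_sub_one_of_pos hB0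
    nlinarith [sq_nonneg ε, sq_nonneg B, sq_nonneg (ε * B), sq_nonneg (B - 1)]

lemma PhiD_bound {r : ℝ → ℝ} {C : ℝ} (hrb : ∀ a, |r a| ≤ C)
    (hr'b : ∀ a, |deriv r a| ≤ C) {α : ℝ} (hα : 0 ≤ α) :
    |PhiD μc σc wc r α t ε|
      ≤ (N * (3 * B * C + α * B * (3 * B ^ 2 + 1) + α * 38 * N * B ^ 7)) * (1 + ε ^ 2) := by
  have hB1 := hB.1
  have hBp := hB.2
  have hB0 : (0:ℝ) < B := lt_of_lt_of_le zero_lt_one hB1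
  have hC0 : (0:ℝ) ≤ C := le_trans (abs_nonneg (r 0)) (hrb 0)
  have hQ0 : (0:ℝ) ≤ 1 + ε ^ 2 := by positivity
  have hQ1 : (1:ℝ) ≤ 1 + ε ^ 2 := by nlinarith [sq_nonneg ε]
  have hεQ : |ε| ≤ 1 + ε ^ 2 := by nlinarith [sq_nonneg (|ε| - 1), sq_abs ε, abs_nonneg ε]
  have hterm : ∀ k : Fin N,
      |deriv (wc k) t * (r (μc k t + σc k t * ε)
          - α * Real.log (mcurve μc σc wc t (μc k t + σc k t * ε)))
        + wc k t * (deriv r (μc k t + σc k t * ε) * (deriv (μc k) t + deriv (σc k) t * ε)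
          - α * (mD μc σc wc t (μc k t + σc k t * ε) (deriv (μc k) t + deriv (σc k) t * ε)
                  / mcurve μc σc wc t (μc k t + σc k t * ε)))|
      ≤ (3 * B * C + α * B * (3 * B ^ 2 + 1) + α * 38 * N * B ^ 7) * (1 + ε ^ 2) := by
    intro k
    obtain ⟨-, -, hμ'k, hσ'k, hw'k, -, -⟩ := hBp k t ht
    have hlog := log_m_bound hN hσpos hwpos hwsum hB ht k ε
    have hmd := mD_div_bound hN hσpos hwpos hwsum hB ht k ε
    have hwk1 : wc k t ≤ 1 := by
      rw [← hwsum t]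
      exact Finset.single_le_sum (fun i _ => (hwpos i t).le) (Finset.mem_univ k)
    have hb' : |deriv (μc k) t + deriv (σc k) t * ε| ≤ 2 * B * (1 + ε ^ 2) := by
      refine (abs_add_le _ _).trans ?_
      rw [abs_mul]
      have h1 : |deriv (σc k) t| * |ε| ≤ B * (1 + ε ^ 2) :=
        mul_le_mul hσ'k hεQ (abs_nonneg ε) hB0.le
      nlinarith
    have hin1 : |r (μc k t + σc k t * ε)
        - α * Real.log (mcurve μc σc wc t (μc k t + σc k t * ε))|
        ≤ C + α * ((3 * B ^ 2 + 1) * (1 + ε ^ 2)) := by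
      refine (abs_sub _ _).trans ?_
      rw [abs_mul, abs_of_nonneg hα]
      have := mul_le_mul_of_nonneg_left hlog hα
      linarith [hrb (μc k t + σc k t * ε)]
    have hin2 : |deriv r (μc k t + σc k t * ε) * (deriv (μc k) t + deriv (σc k) t * ε)
        - α * (mD μc σc wc t (μc k t + σc k t * ε) (deriv (μc k) t + deriv (σc k) t * ε)
                / mcurve μc σc wc t (μc k t + σc k t * ε))|
        ≤ C * (2 * B * (1 + ε ^ 2)) + α * (38 * N * B ^ 7 * (1 + ε ^ 2)) := by
      refine (abs_sub _ _).trans ?_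
      rw [abs_mul, abs_mul, abs_of_nonneg hα]
      have h1 : |deriv r (μc k t + σc k t * ε)| * |deriv (μc k) t + deriv (σc k) t * ε|
          ≤ C * (2 * B * (1 + ε ^ 2)) :=
        mul_le_mul (hr'b _) hb' (abs_nonneg _) hC0
      have h2 := mul_le_mul_of_nonneg_left hmd hα
      linarith
    calc |deriv (wc k) t * (r (μc k t + σc k t * ε)
          - α * Real.log (mcurve μc σc wc t (μc k t + σc k t * ε)))
        + wc k t * (deriv r (μc k t + σc k t * ε) * (deriv (μc k) t + deriv (σc k) t * ε)
          - α * (mD μc σc wc t (μc k t + σc k t * ε) (deriv (μc k) t + deriv (σc k) t * ε)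
                  / mcurve μc σc wc t (μc k t + σc k t * ε)))|
        ≤ |deriv (wc k) t| * |r (μc k t + σc k t * ε)
            - α * Real.log (mcurve μc σc wc t (μc k t + σc k t * ε))|
          + wc k t * |deriv r (μc k t + σc k t * ε) * (deriv (μc k) t + deriv (σc k) t * ε)
            - α * (mD μc σc wc t (μc k t + σc k t * ε) (deriv (μc k) t + deriv (σc k) t * ε)
                    / mcurve μc σc wc t (μc k t + σc k t * ε))| := by
          refine (abs_add_le _ _).trans ?_
          rw [abs_mul, abs_mul, abs_of_pos (hwpos k t)]
      _ ≤ B * (C + α * ((3 * B ^ 2 + 1) * (1 + ε ^ 2)))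
          + 1 * (C * (2 * B * (1 + ε ^ 2)) + α * (38 * N * B ^ 7 * (1 + ε ^ 2))) := by
          apply add_le_add
          · exact mul_le_mul hw'k hin1 (abs_nonneg _) hB0.le
          · apply mul_le_mul hwk1 hin2 (abs_nonneg _) zero_le_one
      _ ≤ (3 * B * C + α * B * (3 * B ^ 2 + 1) + α * 38 * N * B ^ 7) * (1 + ε ^ 2) := by
          have hN0 : (0:ℝ) ≤ (N:ℝ) := Nat.cast_nonneg N
          have h1 : B * C ≤ B * C * (1 + ε ^ 2) := by nlinarith [mul_nonneg (mul_nonneg hB0.le hC0) (sq_nonneg ε)]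
          have h2 : α * B * ((3 * B ^ 2 + 1) * (1 + ε ^ 2))
              ≤ α * B * (3 * B ^ 2 + 1) * (1 + ε ^ 2) := by ring_nf; nlinarith [sq_nonneg ε]
          have h3 : (1:ℝ) ≤ B ^ 7 := one_le_pow₀ hB1
          nlinarith [mul_le_mul_of_nonneg_right h3 (mul_nonneg (mul_nonneg hα hN0) hQ0)]
  unfold PhiD
  refine (Finset.abs_sum_le_sum_abs _ _).trans ?_
  have := Finset.sum_le_card_nsmul Finset.univ _ _ (fun j _ => hterm j)
  rw [Finset.card_univ, Fintype.card_fin, nsmul_eq_mul] at this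
  calc _ ≤ (N:ℝ) * ((3 * B * C + α * B * (3 * B ^ 2 + 1) + α * 38 * N * B ^ 7) * (1 + ε ^ 2)) :=
        this
    _ = _ := by ring

end bounds

lemma continuous_mcurve_a {N : ℕ} (μc σc wc : Fin N → ℝ → ℝ) (t : ℝ) :
    Continuous (fun a => mcurve μc σc wc t a) := by
  unfold mcurve
  exact continuous_finset_sum _ (fun k _ => continuous_const.mul (continuous_gpdf _ _))

lemma integrable_quad_gpdf {σ : ℝ} (hσ : 0 < σ) (μ c d : ℝ) :
    Integrable (fun a => (c + d * (a - μ) ^ 2) * gpdf μ σ a) := by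
  have hb : (0:ℝ) < 1 / (2 * σ ^ 2) := by positivity
  have h2 : Integrable (fun x : ℝ => x ^ 2 * Real.exp (-(1 / (2 * σ ^ 2)) * x ^ 2)) := by
    have h := integrable_rpow_mul_exp_neg_mul_sq hb (by norm_num : (-1:ℝ) < 2)
    have hfun : (fun x : ℝ => x ^ (2:ℝ) * Real.exp (-(1 / (2 * σ ^ 2)) * x ^ 2))
        = fun x : ℝ => x ^ 2 * Real.exp (-(1 / (2 * σ ^ 2)) * x ^ 2) := by
      funext x
      rw [show (2:ℝ) = ((2:ℕ):ℝ) by norm_num, Real.rpow_natCast]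
    rwa [hfun] at h
  have h3 : Integrable (fun x : ℝ => Real.exp (-(1 / (2 * σ ^ 2)) * x ^ 2)) :=
    integrable_exp_neg_mul_sq hb
  have hsum : Integrable (fun x : ℝ => c * Real.exp (-(1 / (2 * σ ^ 2)) * x ^ 2)
      + d * (x ^ 2 * Real.exp (-(1 / (2 * σ ^ 2)) * x ^ 2))) :=
    (h3.const_mul c).add (h2.const_mul d)
  have h5 := hsum.comp_add_right (-μ)
  have h6 := h5.const_mul ((σ * Real.sqrt (2 * Real.pi))⁻¹)
  apply h6.congr
  filter_upwards with a
  rw [gpdf_eq hσ,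
    show -((a - μ) ^ 2) / (2 * σ ^ 2) = -(1 / (2 * σ ^ 2)) * (a + -μ) ^ 2 by ring]
  ring_nf

lemma integrable_quad_gpdf01 (c d : ℝ) :
    Integrable (fun ε : ℝ => (c + d * ε ^ 2) * gpdf 0 1 ε) := by
  have := integrable_quad_gpdf one_pos 0 c d
  simpa using this

lemma integral_gpdf_subst {σ : ℝ} (hσ : 0 < σ) (μ : ℝ) (g : ℝ → ℝ) :
    ∫ a, g a * gpdf μ σ a = ∫ ε, g (μ + σ * ε) * gpdf 0 1 ε := by
  have hσ0 : σ ≠ 0 := ne_of_gt hσ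
  have h2 := MeasureTheory.Measure.integral_comp_mul_left
    (fun y => g (y + μ) * gpdf μ σ (y + μ)) σ
  have h3 := MeasureTheory.integral_add_right_eq_self (μ := volume) (fun a => g a * gpdf μ σ a) μ
  have key : ∫ x, g (σ * x + μ) * gpdf μ σ (σ * x + μ)
      = σ⁻¹ * ∫ a, g a * gpdf μ σ a := by
    rw [h2, h3, smul_eq_mul, abs_of_pos (by positivity : (0:ℝ) < σ⁻¹)]
  have lhs : ∫ x, g (σ * x + μ) * gpdf μ σ (σ * x + μ)
      = σ⁻¹ * ∫ x, g (μ + σ * x) * gpdf 0 1 x := by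
    have h1 : ∀ x : ℝ, g (σ * x + μ) * gpdf μ σ (σ * x + μ)
        = σ⁻¹ * (g (μ + σ * x) * gpdf 0 1 x) := by
      intro x
      rw [show σ * x + μ = μ + σ * x by ring, gpdf_affine hσ]
      ring
    simp_rw [h1]
    rw [MeasureTheory.integral_const_mul]
  have := key.symm.trans lhs
  exact (mul_left_cancel₀ (inv_ne_zero hσ0) this.symm).symm


lemma continuous_Phi (hN : 1 ≤ N) (hσpos : ∀ k t, 0 < σc k t) (hwpos : ∀ k t, 0 < wc k t)
    {r : ℝ → ℝ} (hrc : Continuous r) (α t : ℝ) :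
    Continuous (fun ε => ∑ k, wc k t *
      (r (μc k t + σc k t * ε)
        - α * Real.log (mcurve μc σc wc t (μc k t + σc k t * ε)))) := by
  apply continuous_finset_sum
  intro k _
  have haff : Continuous fun ε : ℝ => μc k t + σc k t * ε := by continuity
  apply Continuous.mul continuous_const
  apply Continuous.sub (hrc.comp haff)
  apply Continuous.mul continuous_const
  exact Continuous.log ((continuous_mcurve_a μc σc wc t).comp haff)
    (fun ε => ne_of_gt (mcurve_pos hN hσpos hwpos t _))

lemma continuous_PhiD (hN : 1 ≤ N) (hσpos : ∀ k t, 0 < σc k t) (hwpos : ∀ k t, 0 < wc k t)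
    {r : ℝ → ℝ} (hrc : Continuous r) (hr'c : Continuous (deriv r)) (α t : ℝ) :
    Continuous (fun ε => PhiD μc σc wc r α t ε) := by
  unfold PhiD
  apply continuous_finset_sum
  intro k _
  have haff : Continuous fun ε : ℝ => μc k t + σc k t * ε := by continuity
  have haff' : Continuous fun ε : ℝ => deriv (μc k) t + deriv (σc k) t * ε := by continuity
  have hm : Continuous fun ε => mcurve μc σc wc t (μc k t + σc k t * ε) :=
    (continuous_mcurve_a μc σc wc t).comp haff
  have hmne : ∀ ε : ℝ, mcurve μc σc wc t (μc k t + σc k t * ε) ≠ 0 :=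
    fun ε => ne_of_gt (mcurve_pos hN hσpos hwpos t _)
  have hlog : Continuous fun ε =>
      Real.log (mcurve μc σc wc t (μc k t + σc k t * ε)) := hm.log hmne
  have hmD : Continuous fun ε => mD μc σc wc t (μc k t + σc k t * ε)
      (deriv (μc k) t + deriv (σc k) t * ε) := by
    unfold mD
    apply continuous_finset_sum
    intro j _
    apply Continuous.add
    · exact continuous_const.mul ((continuous_gpdf _ _).comp haff)
    · apply Continuous.mul continuous_const
      apply Continuous.mul ((continuous_gpdf _ _).comp haff)
      unfold Dcoef
      apply Continuous.add
      · apply Continuous.sub continuous_const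
        exact (((haff.sub continuous_const).mul (haff'.sub continuous_const)).div_const _)
      · exact ((((haff.sub continuous_const).pow 2).mul continuous_const).div_const _)
  apply Continuous.add
  · exact continuous_const.mul ((hrc.comp haff).sub (continuous_const.mul hlog))
  · exact continuous_const.mul (((hr'c.comp haff).mul haff').sub
      (continuous_const.mul (hmD.div hm hmne)))

lemma log_m_bound_a (hN : 1 ≤ N) (hσpos : ∀ k t, 0 < σc k t) (hwpos : ∀ k t, 0 < wc k t)
    (hwsum : ∀ t, (∑ k, wc k t) = 1) {t₀ B : ℝ} (hB : BProp μc σc wc t₀ B)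
    {t : ℝ} (ht : t ∈ Set.Icc (t₀ - 1) (t₀ + 1)) (k : Fin N) (a : ℝ) :
    |Real.log (mcurve μc σc wc t a)| ≤ 3 * B ^ 2 + B ^ 2 / 2 * (a - μc k t) ^ 2 := by
  have hB1 := hB.1
  have hBp := hB.2
  have hB0 : (0:ℝ) < B := lt_of_lt_of_le zero_lt_one hB1
  have hm := mcurve_pos (μc := μc) hN hσpos hwpos t a
  have hub : mcurve μc σc wc t a ≤ B := by
    unfold mcurve
    calc (∑ j, wc j t * gpdf (μc j t) (σc j t) a) ≤ ∑ j, wc j t * B := by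
          apply Finset.sum_le_sum
          intro j _
          apply mul_le_mul_of_nonneg_left _ (hwpos j t).le
          obtain ⟨-, -, -, -, -, hσlj, -⟩ := hBp j t ht
          refine (gpdf_le (hσpos j t) _ _).trans ?_
          rw [mul_inv]
          calc (σc j t)⁻¹ * (Real.sqrt (2 * Real.pi))⁻¹ ≤ B * 1 := by
                apply mul_le_mul _ _ (by positivity) hB0.le
                · have := inv_anti₀ (by positivity : (0:ℝ) < B⁻¹) hσlj
                  rwa [inv_inv] at this
                · rw [inv_le_one_iff₀]; right; exact one_le_sqrt2pi
            _ = B := mul_one B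
      _ = B := by rw [← Finset.sum_mul, hwsum t, one_mul]
  obtain ⟨-, hσk, -, -, -, hσlk, hwlk⟩ := hBp k t ht
  have hσk0 := hσpos k t
  have hlb : (3 * B ^ 2)⁻¹ * Real.exp (-(B ^ 2 / 2) * (a - μc k t) ^ 2)
      ≤ mcurve μc σc wc t a := by
    refine le_trans ?_ (le_mcurve hσpos hwpos k t a)
    rw [gpdf_eq hσk0]
    have h1 : (3 * B ^ 2)⁻¹ ≤ wc k t * (σc k t * Real.sqrt (2 * Real.pi))⁻¹ := by
      have e1 : B⁻¹ ≤ (σc k t)⁻¹ := inv_anti₀ hσk0 hσk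
      have e2 : (3:ℝ)⁻¹ ≤ (Real.sqrt (2 * Real.pi))⁻¹ := inv_anti₀ sqrt2pi_pos sqrt2pi_le
      rw [mul_inv (σc k t) (Real.sqrt (2 * Real.pi))]
      calc (3 * B ^ 2)⁻¹ = B⁻¹ * (B⁻¹ * 3⁻¹) := by
            rw [show (3:ℝ) * B ^ 2 = B * (B * 3) by ring, mul_inv, mul_inv]
        _ ≤ wc k t * ((σc k t)⁻¹ * (Real.sqrt (2 * Real.pi))⁻¹) := by
            apply mul_le_mul hwlk (mul_le_mul e1 e2 (by norm_num) (by positivity))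
              (by positivity) (hwpos k t).le
    have hσB : (σc k t)⁻¹ ≤ B := by
      have := inv_anti₀ (by positivity : (0:ℝ) < B⁻¹) hσlk
      rwa [inv_inv] at this
    have hh : (2 * (σc k t) ^ 2)⁻¹ ≤ B ^ 2 / 2 := by
      rw [mul_inv, ← inv_pow]
      calc (2:ℝ)⁻¹ * ((σc k t)⁻¹) ^ 2 ≤ 2⁻¹ * B ^ 2 :=
            mul_le_mul_of_nonneg_left (pow_le_pow_left₀ (by positivity) hσB 2) (by norm_num)
        _ = B ^ 2 / 2 := by ring
    have key : (a - μc k t) ^ 2 / (2 * (σc k t) ^ 2) ≤ B ^ 2 / 2 * (a - μc k t) ^ 2 := by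
      rw [div_eq_mul_inv]
      calc (a - μc k t) ^ 2 * (2 * (σc k t) ^ 2)⁻¹ ≤ (a - μc k t) ^ 2 * (B ^ 2 / 2) :=
            mul_le_mul_of_nonneg_left hh (sq_nonneg _)
        _ = B ^ 2 / 2 * (a - μc k t) ^ 2 := by ring
    have h2 : Real.exp (-(B ^ 2 / 2) * (a - μc k t) ^ 2)
        ≤ Real.exp (-((a - μc k t) ^ 2) / (2 * (σc k t) ^ 2)) := by
      apply Real.exp_le_exp.2
      rw [show -((a - μc k t) ^ 2) / (2 * (σc k t) ^ 2)
        = -((a - μc k t) ^ 2 / (2 * (σc k t) ^ 2)) by ring, neg_mul]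
      exact neg_le_neg key
    calc (3 * B ^ 2)⁻¹ * Real.exp (-(B ^ 2 / 2) * (a - μc k t) ^ 2)
        ≤ (wc k t * (σc k t * Real.sqrt (2 * Real.pi))⁻¹)
            * Real.exp (-((a - μc k t) ^ 2) / (2 * (σc k t) ^ 2)) :=
          mul_le_mul h1 h2 (Real.exp_pos _).le
            (mul_nonneg (hwpos k t).le (inv_nonneg.2 (mul_nonneg hσk0.le sqrt2pi_pos.le)))
      _ = wc k t * ((σc k t * Real.sqrt (2 * Real.pi))⁻¹
            * Real.exp (-((a - μc k t) ^ 2) / (2 * (σc k t) ^ 2))) := by ring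
  rw [abs_le]
  constructor
  · have h1 : Real.log ((3 * B ^ 2)⁻¹ * Real.exp (-(B ^ 2 / 2) * (a - μc k t) ^ 2))
        ≤ Real.log (mcurve μc σc wc t a) := Real.log_le_log (by positivity) hlb
    have h2 : Real.log ((3 * B ^ 2)⁻¹ * Real.exp (-(B ^ 2 / 2) * (a - μc k t) ^ 2))
        = -Real.log (3 * B ^ 2) + -(B ^ 2 / 2) * (a - μc k t) ^ 2 := by
      rw [Real.log_mul (by positivity) (Real.exp_ne_zero _), Real.log_inv, Real.log_exp]
    have h3 : Real.log (3 * B ^ 2) ≤ 3 * B ^ 2 - 1 :=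
      Real.log_le_sub_one_of_pos (by positivity)
    nlinarith [sq_nonneg (a - μc k t), sq_nonneg B]
  · have h1 : Real.log (mcurve μc σc wc t a) ≤ Real.log B := Real.log_le_log hm hub
    have h2 : Real.log B ≤ B - 1 := Real.log_le_sub_one_of_pos hB0
    nlinarith [sq_nonneg (a - μc k t), sq_nonneg B, sq_nonneg (B - 1),
      mul_nonneg (by positivity : (0:ℝ) ≤ B ^ 2 / 2) (sq_nonneg (a - μc k t))]


lemma Phi_bound (hN : 1 ≤ N) (hσpos : ∀ k t, 0 < σc k t) (hwpos : ∀ k t, 0 < wc k t)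
    (hwsum : ∀ t, (∑ k, wc k t) = 1) {t₀ B : ℝ} (hB : BProp μc σc wc t₀ B)
    {t : ℝ} (ht : t ∈ Set.Icc (t₀ - 1) (t₀ + 1)) {r : ℝ → ℝ} {C : ℝ}
    (hrb : ∀ a, |r a| ≤ C) {α : ℝ} (hα : 0 ≤ α) (ε : ℝ) :
    |∑ k, wc k t * (r (μc k t + σc k t * ε)
        - α * Real.log (mcurve μc σc wc t (μc k t + σc k t * ε)))|
      ≤ (C + α * (3 * B ^ 2 + 1)) + (α * (3 * B ^ 2 + 1)) * ε ^ 2 := by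
  have hQ1 : (1:ℝ) ≤ 1 + ε ^ 2 := by nlinarith [sq_nonneg ε]
  have hterm : ∀ k : Fin N, |wc k t * (r (μc k t + σc k t * ε)
      - α * Real.log (mcurve μc σc wc t (μc k t + σc k t * ε)))|
      ≤ wc k t * (C + α * ((3 * B ^ 2 + 1) * (1 + ε ^ 2))) := by
    intro k
    rw [abs_mul, abs_of_pos (hwpos k t)]
    apply mul_le_mul_of_nonneg_left _ (hwpos k t).le
    refine (abs_sub _ _).trans ?_
    rw [abs_mul, abs_of_nonneg hα]
    have := mul_le_mul_of_nonneg_left (log_m_bound hN hσpos hwpos hwsum hB ht k ε) hα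
    linarith [hrb (μc k t + σc k t * ε)]
  calc |∑ k, wc k t * (r (μc k t + σc k t * ε)
        - α * Real.log (mcurve μc σc wc t (μc k t + σc k t * ε)))|
      ≤ ∑ k, wc k t * (C + α * ((3 * B ^ 2 + 1) * (1 + ε ^ 2))) :=
        (Finset.abs_sum_le_sum_abs _ _).trans (Finset.sum_le_sum (fun k _ => hterm k))
    _ = C + α * ((3 * B ^ 2 + 1) * (1 + ε ^ 2)) := by
        rw [← Finset.sum_mul, hwsum t, one_mul]
    _ = (C + α * (3 * B ^ 2 + 1)) + (α * (3 * B ^ 2 + 1)) * ε ^ 2 := by ring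

lemma J_eq (hN : 1 ≤ N) (hμ : ∀ k, ContDiff ℝ 1 (μc k)) (hσ : ∀ k, ContDiff ℝ 1 (σc k))
    (hw : ∀ k, ContDiff ℝ 1 (wc k)) (hσpos : ∀ k t, 0 < σc k t)
    (hwpos : ∀ k t, 0 < wc k t) (hwsum : ∀ t, (∑ k, wc k t) = 1)
    {r : ℝ → ℝ} (hr : ContDiff ℝ 1 r) {C : ℝ} (hrb : ∀ a, |r a| ≤ C)
    {α : ℝ} (hα : 0 ≤ α) (t : ℝ) :
    ∫ a, (r a - α * Real.log (mcurve μc σc wc t a)) * mcurve μc σc wc t a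
      = ∫ ε, (∑ k, wc k t * (r (μc k t + σc k t * ε)
          - α * Real.log (mcurve μc σc wc t (μc k t + σc k t * ε)))) * gpdf 0 1 ε := by
  obtain ⟨B, hB⟩ := exists_bound hμ hσ hw hσpos hwpos t
  have hB1 := hB.1
  have hBp := hB.2
  have htI : t ∈ Set.Icc (t - 1) (t + 1) := ⟨by linarith, by linarith⟩
  have hgc : Continuous (fun a => r a - α * Real.log (mcurve μc σc wc t a)) :=
    hr.continuous.sub (continuous_const.mul ((continuous_mcurve_a μc σc wc t).log
      (fun a => ne_of_gt (mcurve_pos hN hσpos hwpos t a))))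
  have hgb : ∀ k : Fin N, ∀ a : ℝ, |r a - α * Real.log (mcurve μc σc wc t a)|
      ≤ (C + α * (3 * B ^ 2)) + (α * (B ^ 2 / 2)) * (a - μc k t) ^ 2 := by
    intro k a
    have h1 := log_m_bound_a hN hσpos hwpos hwsum hB htI k a
    refine (abs_sub _ _).trans ?_
    rw [abs_mul, abs_of_nonneg hα]
    have := mul_le_mul_of_nonneg_left h1 hα
    nlinarith [hrb a]
  have hInt : ∀ k : Fin N, Integrable (fun a => wc k t *
      ((r a - α * Real.log (mcurve μc σc wc t a)) * gpdf (μc k t) (σc k t) a)) := by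
    intro k
    apply Integrable.const_mul
    apply Integrable.mono'
      (integrable_quad_gpdf (hσpos k t) (μc k t) (C + α * (3 * B ^ 2)) (α * (B ^ 2 / 2)))
    · exact (hgc.mul (continuous_gpdf _ _)).aestronglyMeasurable
    · filter_upwards with a
      rw [Real.norm_eq_abs, abs_mul, abs_of_pos (gpdf_pos (hσpos k t) _ _)]
      exact mul_le_mul_of_nonneg_right (hgb k a) (gpdf_pos (hσpos k t) _ _).le
  have hInt2 : ∀ k : Fin N, Integrable (fun ε : ℝ => wc k t *
      ((r (μc k t + σc k t * ε)
        - α * Real.log (mcurve μc σc wc t (μc k t + σc k t * ε))) * gpdf 0 1 ε)) := by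
    intro k
    apply Integrable.const_mul
    apply Integrable.mono'
      (integrable_quad_gpdf01 (C + α * (3 * B ^ 2)) (α * (B ^ 2 / 2) * B ^ 2))
    · have haff : Continuous fun ε : ℝ => μc k t + σc k t * ε := by continuity
      exact ((hgc.comp haff).mul (continuous_gpdf 0 1)).aestronglyMeasurable
    · filter_upwards with ε
      rw [Real.norm_eq_abs, abs_mul, abs_of_pos (gpdf_pos one_pos _ _)]
      apply mul_le_mul_of_nonneg_right _ (gpdf_pos one_pos _ _).le
      refine (hgb k (μc k t + σc k t * ε)).trans ?_
      have h2 : (μc k t + σc k t * ε - μc k t) ^ 2 ≤ B ^ 2 * ε ^ 2 := by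
        rw [show μc k t + σc k t * ε - μc k t = σc k t * ε by ring, mul_pow]
        apply mul_le_mul_of_nonneg_right _ (sq_nonneg ε)
        obtain ⟨-, hσk, -, -, -, -, -⟩ := hBp k t htI
        exact pow_le_pow_left₀ (hσpos k t).le hσk 2
      have h3 : (0:ℝ) ≤ α * (B ^ 2 / 2) := by positivity
      nlinarith [mul_le_mul_of_nonneg_left h2 h3]
  calc ∫ a, (r a - α * Real.log (mcurve μc σc wc t a)) * mcurve μc σc wc t a
      = ∑ k, ∫ a, wc k t *
          ((r a - α * Real.log (mcurve μc σc wc t a)) * gpdf (μc k t) (σc k t) a) := by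
        rw [← integral_finset_sum _ (fun k _ => hInt k)]
        apply integral_congr_ae
        filter_upwards with a
        unfold mcurve
        rw [Finset.mul_sum]
        exact Finset.sum_congr rfl (fun k _ => by ring)
    _ = ∑ k, wc k t * ∫ a,
          (r a - α * Real.log (mcurve μc σc wc t a)) * gpdf (μc k t) (σc k t) a := by
        exact Finset.sum_congr rfl (fun k _ => integral_const_mul _ _)
    _ = ∑ k, wc k t * ∫ ε, (r (μc k t + σc k t * ε)
          - α * Real.log (mcurve μc σc wc t (μc k t + σc k t * ε))) * gpdf 0 1 ε := by
        refine Finset.sum_congr rfl (fun k _ => ?_)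
        rw [integral_gpdf_subst (hσpos k t) (μc k t)
          (fun a => r a - α * Real.log (mcurve μc σc wc t a))]
    _ = ∑ k, ∫ ε, wc k t * ((r (μc k t + σc k t * ε)
          - α * Real.log (mcurve μc σc wc t (μc k t + σc k t * ε))) * gpdf 0 1 ε) := by
        exact Finset.sum_congr rfl (fun k _ => (integral_const_mul _ _).symm)
    _ = ∫ ε, ∑ k, wc k t * ((r (μc k t + σc k t * ε)
          - α * Real.log (mcurve μc σc wc t (μc k t + σc k t * ε))) * gpdf 0 1 ε) :=
        (integral_finset_sum _ (fun k _ => hInt2 k)).symm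
    _ = ∫ ε, (∑ k, wc k t * (r (μc k t + σc k t * ε)
          - α * Real.log (mcurve μc σc wc t (μc k t + σc k t * ε)))) * gpdf 0 1 ε := by
        apply integral_congr_ae
        filter_upwards with ε
        rw [Finset.sum_mul]
        exact Finset.sum_congr rfl (fun k _ => by ring)

lemma hasDerivAt_J (hN : 1 ≤ N) (hμ : ∀ k, ContDiff ℝ 1 (μc k)) (hσ : ∀ k, ContDiff ℝ 1 (σc k))
    (hw : ∀ k, ContDiff ℝ 1 (wc k)) (hσpos : ∀ k t, 0 < σc k t)
    (hwpos : ∀ k t, 0 < wc k t) (hwsum : ∀ t, (∑ k, wc k t) = 1)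
    {r : ℝ → ℝ} (hr : ContDiff ℝ 1 r) {C : ℝ} (hrb : ∀ a, |r a| ≤ C)
    (hr'b : ∀ a, |deriv r a| ≤ C) {α : ℝ} (hα : 0 ≤ α) (t₀ : ℝ) :
    HasDerivAt (fun t => ∫ ε, (∑ k, wc k t * (r (μc k t + σc k t * ε)
        - α * Real.log (mcurve μc σc wc t (μc k t + σc k t * ε)))) * gpdf 0 1 ε)
      (∫ ε, PhiD μc σc wc r α t₀ ε * gpdf 0 1 ε) t₀ := by
  obtain ⟨B, hB⟩ := exists_bound hμ hσ hw hσpos hwpos t₀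
  have ht₀ : t₀ ∈ Set.Icc (t₀ - 1) (t₀ + 1) := ⟨by linarith, by linarith⟩
  have hballI : ∀ t ∈ Metric.ball t₀ (1:ℝ), t ∈ Set.Icc (t₀ - 1) (t₀ + 1) := by
    intro t htb
    rw [Metric.mem_ball, Real.dist_eq] at htb
    obtain ⟨h1, h2⟩ := abs_lt.mp htb
    exact ⟨by linarith, by linarith⟩
  have key := hasDerivAt_integral_of_dominated_loc_of_deriv_le (μ := volume)
    (F := fun t ε => (∑ k, wc k t * (r (μc k t + σc k t * ε)
        - α * Real.log (mcurve μc σc wc t (μc k t + σc k t * ε)))) * gpdf 0 1 ε)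
    (F' := fun t ε => PhiD μc σc wc r α t ε * gpdf 0 1 ε)
    (bound := fun ε => ((N * (3 * B * C + α * B * (3 * B ^ 2 + 1) + α * 38 * N * B ^ 7))
      + (N * (3 * B * C + α * B * (3 * B ^ 2 + 1) + α * 38 * N * B ^ 7)) * ε ^ 2)
      * gpdf 0 1 ε)
    (x₀ := t₀) (Metric.ball_mem_nhds t₀ zero_lt_one)
    (Filter.Eventually.of_forall (fun t =>
      ((continuous_Phi hN hσpos hwpos hr.continuous α t).mul
        (continuous_gpdf 0 1)).aestronglyMeasurable))
    ?hFint
    (((continuous_PhiD hN hσpos hwpos hr.continuous (hr.continuous_deriv le_rfl) α t₀).mul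
        (continuous_gpdf 0 1)).aestronglyMeasurable)
    ?hbound
    (integrable_quad_gpdf01 _ _)
    (Filter.Eventually.of_forall (fun ε t _ =>
      (hasDerivAt_Phi hN hμ hσ hw hσpos hwpos hr α t ε).mul_const (gpdf 0 1 ε)))
  · exact key.2
  case hFint =>
    apply Integrable.mono' (integrable_quad_gpdf01 (C + α * (3 * B ^ 2 + 1))
      (α * (3 * B ^ 2 + 1)))
    · exact ((continuous_Phi hN hσpos hwpos hr.continuous α t₀).mul
        (continuous_gpdf 0 1)).aestronglyMeasurable
    · filter_upwards with ε
      rw [Real.norm_eq_abs, abs_mul, abs_of_pos (gpdf_pos one_pos _ _)]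
      exact mul_le_mul_of_nonneg_right
        (Phi_bound hN hσpos hwpos hwsum hB ht₀ hrb hα ε) (gpdf_pos one_pos _ _).le
  case hbound =>
    filter_upwards with ε
    intro t htb
    rw [Real.norm_eq_abs, abs_mul, abs_of_pos (gpdf_pos one_pos _ _)]
    apply mul_le_mul_of_nonneg_right _ (gpdf_pos one_pos _ _).le
    refine (PhiD_bound hN hσpos hwpos hwsum hB (hballI t htb) ε hrb hr'b hα).trans ?_
    apply le_of_eq
    ring


end S8

/-- marginalized reparameterization form of the derivative of the
entropy-regularized objective `J(t) = ∫ (r(a) − α·log m_t(a))·m_t(a) da` along a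
smooth curve of Gaussian mixtures: with `f_k(t,ε) = μ_k(t) + σ_k(t)·ε`, for
every `ε` the map `t ↦ Σ_k w_k(t)·(r(f_k(t,ε)) − α·log m_t(f_k(t,ε)))` is
differentiable at `t₀`, and `J′(t₀)` is the `φ(ε;0,1)`-integral of its
derivative at `t₀`. -/
theorem stmt8 (N : ℕ) (hN : 1 ≤ N) (μc σc wc : Fin N → ℝ → ℝ)
    (hμ : ∀ k, ContDiff ℝ 1 (μc k)) (hσ : ∀ k, ContDiff ℝ 1 (σc k))
    (hw : ∀ k, ContDiff ℝ 1 (wc k))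
    (hσpos : ∀ k t, 0 < σc k t) (hwpos : ∀ k t, 0 < wc k t)
    (hwsum : ∀ t, (∑ k, wc k t) = 1)
    (r : ℝ → ℝ) (hr : ContDiff ℝ 1 r) (C : ℝ)
    (hrb : ∀ a, |r a| ≤ C) (hr'b : ∀ a, |deriv r a| ≤ C)
    (α : ℝ) (hα : 0 ≤ α) :
    Differentiable ℝ (fun t =>
      ∫ a, (r a - α * Real.log (mcurve μc σc wc t a)) * mcurve μc σc wc t a) ∧
    ∀ t₀ : ℝ,
      (∀ ε : ℝ, DifferentiableAt ℝ
        (fun t => ∑ k, wc k t *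
          (r (μc k t + σc k t * ε)
            - α * Real.log (mcurve μc σc wc t (μc k t + σc k t * ε)))) t₀) ∧
      deriv (fun t =>
          ∫ a, (r a - α * Real.log (mcurve μc σc wc t a)) * mcurve μc σc wc t a) t₀
        = ∫ ε,
            (deriv (fun t => ∑ k, wc k t *
              (r (μc k t + σc k t * ε)
                - α * Real.log (mcurve μc σc wc t (μc k t + σc k t * ε)))) t₀)
            * gpdf 0 1 ε := by
  have hJ : (fun t => ∫ a, (r a - α * Real.log (mcurve μc σc wc t a)) * mcurve μc σc wc t a)
      = fun t => ∫ ε, (∑ k, wc k t * (r (μc k t + σc k t * ε)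
          - α * Real.log (mcurve μc σc wc t (μc k t + σc k t * ε)))) * gpdf 0 1 ε :=
    funext (fun t => S8.J_eq hN hμ hσ hw hσpos hwpos hwsum hr hrb hα t)
  constructor
  · rw [hJ]
    exact fun t₀ =>
      (S8.hasDerivAt_J hN hμ hσ hw hσpos hwpos hwsum hr hrb hr'b hα t₀).differentiableAt
  · intro t₀
    refine ⟨fun ε =>
      (S8.hasDerivAt_Phi hN hμ hσ hw hσpos hwpos hr α t₀ ε).differentiableAt, ?_⟩
    rw [hJ, (S8.hasDerivAt_J hN hμ hσ hw hσpos hwpos hwsum hr hrb hr'b hα t₀).deriv]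
    have hd : ∀ ε : ℝ, deriv (fun t => ∑ k, wc k t *
        (r (μc k t + σc k t * ε)
          - α * Real.log (mcurve μc σc wc t (μc k t + σc k t * ε)))) t₀
        = S8.PhiD μc σc wc r α t₀ ε :=
      fun ε => (S8.hasDerivAt_Phi hN hμ hσ hw hσpos hwpos hr α t₀ ε).deriv
    simp_rw [hd]
end

section
/- Adopt the curve setup. Then for every t the differential entropy H(t) = −∫ m_t(a)·log m_t(a) da is finite, the map t ↦ H(t) is differentiable, and for every t₀ ∈ ℝ one has H′(t₀) = −∫ (∂m_t(a)/∂t)|_{t = t₀}·log m_{t₀}(a) da. -/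
open MeasureTheory Real

/-! ### Auxiliary lemmas about the Gaussian density -/

lemma gpdf_eq_gaussianPDFReal (μ σ : ℝ) :
    gpdf μ σ = ProbabilityTheory.gaussianPDFReal μ (Real.toNNReal (σ ^ 2)) := by
  funext a
  simp [gpdf, ProbabilityTheory.gaussianPDFReal, Real.coe_toNNReal _ (sq_nonneg σ)]

lemma integrable_gpdf (μ σ : ℝ) : Integrable (gpdf μ σ) := by
  rw [gpdf_eq_gaussianPDFReal]
  exact ProbabilityTheory.integrable_gaussianPDFReal _ _

lemma integral_gpdf {σ : ℝ} (hσ : 0 < σ) (μ : ℝ) : ∫ a, gpdf μ σ a = 1 := by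
  rw [gpdf_eq_gaussianPDFReal]
  exact ProbabilityTheory.integral_gaussianPDFReal_eq_one μ
    (by simp [Real.toNNReal_eq_zero, not_le, pow_pos hσ, hσ.ne'])

lemma gpdf_eq {σ : ℝ} (hσ : 0 < σ) (μ a : ℝ) :
    gpdf μ σ a = (Real.sqrt (2 * π))⁻¹ * σ⁻¹ * Real.exp (-((a - μ) ^ 2) / (2 * σ ^ 2)) := by
  unfold gpdf
  rw [show 2 * π * σ ^ 2 = (2 * π) * σ ^ 2 by ring, Real.sqrt_mul (by positivity),
    Real.sqrt_sq hσ.le, mul_inv]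

lemma gpdf_pos {σ : ℝ} (hσ : 0 < σ) (μ a : ℝ) : 0 < gpdf μ σ a := by
  unfold gpdf
  have h2 : (0:ℝ) < 2 * Real.pi * σ ^ 2 := by positivity
  exact mul_pos (inv_pos.2 (Real.sqrt_pos.2 h2)) (Real.exp_pos _)

lemma continuous_gpdf (μ σ : ℝ) : Continuous (gpdf μ σ) := by
  unfold gpdf
  exact continuous_const.mul ((((continuous_id.sub continuous_const).pow 2).neg.div_const _).rexp)

/-- Derivative in `t` of `t ↦ gpdf (μ t) (σ t) a`. -/
noncomputable def gD (μ σ μ' σ' a : ℝ) : ℝ :=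
  gpdf μ σ a * (-σ' / σ + (a - μ) * μ' / σ ^ 2 + (a - μ) ^ 2 * σ' / σ ^ 3)

lemma hasDerivAt_gpdf_comp {f g : ℝ → ℝ} {t f' g' : ℝ} (hf : HasDerivAt f f' t)
    (hg : HasDerivAt g g' t) (hgpos : ∀ u, 0 < g u) (a : ℝ) :
    HasDerivAt (fun u => gpdf (f u) (g u) a) (gD (f t) (g t) f' g' a) t := by
  have hgne : ∀ u, g u ≠ 0 := fun u => (hgpos u).ne'
  have hrw : (fun u => gpdf (f u) (g u) a)
      = fun u => (Real.sqrt (2 * π))⁻¹ * ((g u)⁻¹ * Real.exp (-((a - f u) ^ 2) / (2 * (g u) ^ 2))) :=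
    funext fun u => by rw [gpdf_eq (hgpos u)]; ring
  rw [hrw]
  have hnum : HasDerivAt (fun u => -((a - f u) ^ 2)) (2 * (a - f t) * f') t := by
    have h1 : HasDerivAt (fun u => a - f u) (-f') t := by
      simpa using (hasDerivAt_const t a).fun_sub hf
    have := (h1.fun_pow 2).fun_neg
    refine this.congr_deriv ?_; ring
  have hden : HasDerivAt (fun u => 2 * (g u) ^ 2) (4 * g t * g') t := by
    have := (hg.fun_pow 2).const_mul 2
    refine this.congr_deriv ?_; ring
  have hE := hnum.fun_div hden (by have := hgpos t; positivity)
  have hexp := hE.exp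
  have hinv := hg.fun_inv (hgne t)
  have hmain := (hinv.fun_mul hexp).const_mul (Real.sqrt (2 * π))⁻¹
  refine hmain.congr_deriv ?_
  rw [gD, gpdf_eq (hgpos t)]
  have h0 := hgne t
  have hs : Real.sqrt (2 * π) ≠ 0 := by positivity
  field_simp
  ring

/-! ### Envelope bounds -/

lemma exponent_ineq {s S M σ μ : ℝ} (hs : 0 < s) (h1 : s ≤ σ) (h2 : σ ≤ S) (hM : |μ| ≤ M)
    (a : ℝ) : -((a - μ) ^ 2) / (2 * σ ^ 2) ≤ M ^ 2 / (2 * S ^ 2) + -(4 * S ^ 2)⁻¹ * a ^ 2 := by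
  have hσ : 0 < σ := hs.trans_le h1
  have hS : 0 < S := hσ.trans_le h2
  have hμ2 : μ ^ 2 ≤ M ^ 2 := by nlinarith [sq_abs μ, abs_nonneg μ]
  have step1 : -((a - μ) ^ 2) / (2 * σ ^ 2) ≤ -((a - μ) ^ 2) / (2 * S ^ 2) := by
    rw [div_le_div_iff₀ (by positivity) (by positivity)]
    have hσS : σ ^ 2 ≤ S ^ 2 := by nlinarith
    nlinarith [mul_le_mul_of_nonneg_left hσS (sq_nonneg (a - μ))]
  refine step1.trans ?_
  have e1 : -((a - μ) ^ 2) / (2 * S ^ 2) = (-(2 * (a - μ) ^ 2)) * (4 * S ^ 2)⁻¹ := by ring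
  have e2 : M ^ 2 / (2 * S ^ 2) + -(4 * S ^ 2)⁻¹ * a ^ 2 = (2 * M ^ 2 - a ^ 2) * (4 * S ^ 2)⁻¹ := by
    ring
  rw [e1, e2]
  apply mul_le_mul_of_nonneg_right _ (by positivity)
  nlinarith [sq_nonneg (a - 2 * μ)]

lemma gpdf_le_envelope {s S M σ μ : ℝ} (hs : 0 < s) (h1 : s ≤ σ) (h2 : σ ≤ S) (hM : |μ| ≤ M)
    (a : ℝ) :
    gpdf μ σ a ≤ (Real.sqrt (2 * π) * s)⁻¹ * Real.exp (M ^ 2 / (2 * S ^ 2))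
      * Real.exp (-(4 * S ^ 2)⁻¹ * a ^ 2) := by
  have hσ : 0 < σ := hs.trans_le h1
  rw [gpdf_eq hσ, mul_inv]
  have f1 : (Real.sqrt (2 * π))⁻¹ * σ⁻¹ ≤ (Real.sqrt (2 * π))⁻¹ * s⁻¹ :=
    mul_le_mul_of_nonneg_left (by exact inv_anti₀ hs h1) (by positivity)
  have f2 : Real.exp (-((a - μ) ^ 2) / (2 * σ ^ 2))
      ≤ Real.exp (M ^ 2 / (2 * S ^ 2)) * Real.exp (-(4 * S ^ 2)⁻¹ * a ^ 2) := by
    rw [← Real.exp_add]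
    exact Real.exp_le_exp.2 (exponent_ineq hs h1 h2 hM a)
  calc (Real.sqrt (2 * π))⁻¹ * σ⁻¹ * Real.exp (-((a - μ) ^ 2) / (2 * σ ^ 2))
      ≤ (Real.sqrt (2 * π))⁻¹ * s⁻¹ * (Real.exp (M ^ 2 / (2 * S ^ 2))
          * Real.exp (-(4 * S ^ 2)⁻¹ * a ^ 2)) :=
        mul_le_mul f1 f2 (Real.exp_pos _).le (by positivity)
    _ = (Real.sqrt (2 * π))⁻¹ * s⁻¹ * Real.exp (M ^ 2 / (2 * S ^ 2))
          * Real.exp (-(4 * S ^ 2)⁻¹ * a ^ 2) := by ring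

lemma gpdf_ge_envelope {s S M σ μ : ℝ} (hs : 0 < s) (h1 : s ≤ σ) (h2 : σ ≤ S) (hM : |μ| ≤ M)
    (a : ℝ) :
    (Real.sqrt (2 * π) * S)⁻¹ * Real.exp (-(M ^ 2 / s ^ 2) + -(s ^ 2)⁻¹ * a ^ 2)
      ≤ gpdf μ σ a := by
  have hσ : 0 < σ := hs.trans_le h1
  have hS : 0 < S := hσ.trans_le h2
  have hμ2 : μ ^ 2 ≤ M ^ 2 := by nlinarith [sq_abs μ, abs_nonneg μ]
  rw [gpdf_eq hσ, mul_inv]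
  have f1 : (Real.sqrt (2 * π))⁻¹ * S⁻¹ ≤ (Real.sqrt (2 * π))⁻¹ * σ⁻¹ :=
    mul_le_mul_of_nonneg_left (inv_anti₀ hσ h2) (by positivity)
  have f2 : Real.exp (-(M ^ 2 / s ^ 2) + -(s ^ 2)⁻¹ * a ^ 2)
      ≤ Real.exp (-((a - μ) ^ 2) / (2 * σ ^ 2)) := by
    apply Real.exp_le_exp.2
    have step1 : -((a - μ) ^ 2) / (2 * s ^ 2) ≤ -((a - μ) ^ 2) / (2 * σ ^ 2) := by
      rw [div_le_div_iff₀ (by positivity) (by positivity)]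
      have hsσ : s ^ 2 ≤ σ ^ 2 := by nlinarith
      nlinarith [mul_le_mul_of_nonneg_left hsσ (sq_nonneg (a - μ))]
    refine le_trans ?_ step1
    have e1 : -((a - μ) ^ 2) / (2 * s ^ 2) = (-((a - μ) ^ 2)) * (2 * s ^ 2)⁻¹ := by ring
    have e2 : -(M ^ 2 / s ^ 2) + -(s ^ 2)⁻¹ * a ^ 2
        = (-(2 * M ^ 2 + 2 * a ^ 2)) * (2 * s ^ 2)⁻¹ := by ring
    rw [e1, e2]
    apply mul_le_mul_of_nonneg_right _ (by positivity)
    nlinarith [sq_nonneg (a + μ)]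
  calc (Real.sqrt (2 * π))⁻¹ * S⁻¹ * Real.exp (-(M ^ 2 / s ^ 2) + -(s ^ 2)⁻¹ * a ^ 2)
      ≤ (Real.sqrt (2 * π))⁻¹ * σ⁻¹ * Real.exp (-((a - μ) ^ 2) / (2 * σ ^ 2)) :=
        mul_le_mul f1 f2 (Real.exp_pos _).le (by positivity)

lemma gD_abs_le {s S M M' S' σ μ μ' σ' : ℝ} (hs : 0 < s) (h1 : s ≤ σ) (h2 : σ ≤ S)
    (hM : |μ| ≤ M) (hM' : |μ'| ≤ M') (hS' : |σ'| ≤ S') (a : ℝ) :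
    |gD μ σ μ' σ' a| ≤ ((Real.sqrt (2 * π) * s)⁻¹ * Real.exp (M ^ 2 / (2 * S ^ 2)))
      * ((S' / s + (1 + M) * M' / s ^ 2 + (2 + 2 * M ^ 2) * S' / s ^ 3)
        * ((1 + a ^ 2) * Real.exp (-(4 * S ^ 2)⁻¹ * a ^ 2))) := by
  have hσ : 0 < σ := hs.trans_le h1
  have hM0 : 0 ≤ M := (abs_nonneg μ).trans hM
  have hM'0 : 0 ≤ M' := (abs_nonneg μ').trans hM'
  have hS'0 : 0 ≤ S' := (abs_nonneg σ').trans hS'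
  have habs : |a| ≤ 1 + a ^ 2 := by nlinarith [sq_abs a, abs_nonneg a, sq_nonneg (|a| - 1)]
  have hμ2 : μ ^ 2 ≤ M ^ 2 := by nlinarith [sq_abs μ, abs_nonneg μ]
  rw [gD, abs_mul, abs_of_pos (gpdf_pos hσ μ a)]
  have hpoly : |(-σ' / σ + (a - μ) * μ' / σ ^ 2 + (a - μ) ^ 2 * σ' / σ ^ 3)|
      ≤ (S' / s + (1 + M) * M' / s ^ 2 + (2 + 2 * M ^ 2) * S' / s ^ 3) * (1 + a ^ 2) := by
    have t1 : |(-σ' / σ)| ≤ S' / s := by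
      rw [abs_div, abs_neg]
      exact div_le_div₀ hS'0 hS' hs (by rwa [abs_of_pos hσ])
    have t2 : |(a - μ) * μ' / σ ^ 2| ≤ (1 + M) * (1 + a ^ 2) * M' / s ^ 2 := by
      rw [abs_div, abs_mul]
      apply div_le_div₀ (by positivity) _ (by positivity) _
      · have ham : |a - μ| ≤ (1 + M) * (1 + a ^ 2) := by
          calc |a - μ| ≤ |a| + |μ| := abs_sub _ _
            _ ≤ (1 + a ^ 2) + M := add_le_add habs hM
            _ ≤ (1 + M) * (1 + a ^ 2) := by nlinarith
        exact mul_le_mul ham hM' (abs_nonneg _) (by positivity)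
      · rw [abs_of_pos (by positivity : (0:ℝ) < σ ^ 2)]
        nlinarith
    have t3 : |(a - μ) ^ 2 * σ' / σ ^ 3| ≤ (2 + 2 * M ^ 2) * (1 + a ^ 2) * S' / s ^ 3 := by
      rw [abs_div, abs_mul]
      apply div_le_div₀ (by positivity) _ (by positivity) _
      · have ham2 : |(a - μ) ^ 2| ≤ (2 + 2 * M ^ 2) * (1 + a ^ 2) := by
          rw [abs_of_nonneg (sq_nonneg _)]
          nlinarith [sq_nonneg a, sq_nonneg (a + μ)]
        exact mul_le_mul ham2 hS' (abs_nonneg _) (by positivity)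
      · rw [abs_of_pos (by positivity : (0:ℝ) < σ ^ 3)]
        nlinarith [pow_le_pow_left₀ hs.le h1 3]
    calc |(-σ' / σ + (a - μ) * μ' / σ ^ 2 + (a - μ) ^ 2 * σ' / σ ^ 3)|
        ≤ |(-σ' / σ)| + |(a - μ) * μ' / σ ^ 2| + |(a - μ) ^ 2 * σ' / σ ^ 3| :=
          (abs_add_le _ _).trans (add_le_add (abs_add_le _ _) le_rfl)
      _ ≤ S' / s + (1 + M) * (1 + a ^ 2) * M' / s ^ 2 + (2 + 2 * M ^ 2) * (1 + a ^ 2) * S' / s ^ 3 :=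
          add_le_add (add_le_add t1 t2) t3
      _ ≤ (S' / s + (1 + M) * M' / s ^ 2 + (2 + 2 * M ^ 2) * S' / s ^ 3) * (1 + a ^ 2) := by
          have expand : (S' / s + (1 + M) * M' / s ^ 2 + (2 + 2 * M ^ 2) * S' / s ^ 3) * (1 + a ^ 2)
              = S' / s + (1 + M) * (1 + a ^ 2) * M' / s ^ 2
                + (2 + 2 * M ^ 2) * (1 + a ^ 2) * S' / s ^ 3 + (S' / s) * a ^ 2 := by ring
          rw [expand]
          have : 0 ≤ (S' / s) * a ^ 2 := mul_nonneg (div_nonneg hS'0 hs.le) (sq_nonneg a)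
          linarith
  calc gpdf μ σ a * |(-σ' / σ + (a - μ) * μ' / σ ^ 2 + (a - μ) ^ 2 * σ' / σ ^ 3)|
      ≤ ((Real.sqrt (2 * π) * s)⁻¹ * Real.exp (M ^ 2 / (2 * S ^ 2))
          * Real.exp (-(4 * S ^ 2)⁻¹ * a ^ 2))
          * ((S' / s + (1 + M) * M' / s ^ 2 + (2 + 2 * M ^ 2) * S' / s ^ 3) * (1 + a ^ 2)) :=
        mul_le_mul (gpdf_le_envelope hs h1 h2 hM a) hpoly (abs_nonneg _) (by positivity)
    _ = ((Real.sqrt (2 * π) * s)⁻¹ * Real.exp (M ^ 2 / (2 * S ^ 2)))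
      * ((S' / s + (1 + M) * M' / s ^ 2 + (2 + 2 * M ^ 2) * S' / s ^ 3)
        * ((1 + a ^ 2) * Real.exp (-(4 * S ^ 2)⁻¹ * a ^ 2))) := by ring

/-! ### Compactness bounds and the master integrable dominating function -/

lemma bdd_family {N : ℕ} (f : Fin N → ℝ → ℝ) (hf : ∀ k, Continuous (f k)) {J : Set ℝ}
    (hJ : IsCompact J) : ∃ C, 0 ≤ C ∧ ∀ k, ∀ t ∈ J, |f k t| ≤ C := by
  have h : ∀ k : Fin N, ∃ C, ∀ t ∈ J, |f k t| ≤ C := fun k => by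
    obtain ⟨C, hC⟩ := hJ.exists_bound_of_continuousOn (hf k).continuousOn
    exact ⟨C, fun t ht => by simpa [Real.norm_eq_abs] using hC t ht⟩
  choose C hC using h
  refine ⟨∑ j, |C j|, Finset.sum_nonneg fun j _ => abs_nonneg _, fun k t ht => ?_⟩
  exact (hC k t ht).trans ((le_abs_self _).trans
    (Finset.single_le_sum (fun j _ => abs_nonneg (C j)) (Finset.mem_univ k)))

lemma pos_lb_family {N : ℕ} (hN : 1 ≤ N) (f : Fin N → ℝ → ℝ) (hf : ∀ k, Continuous (f k))
    (hpos : ∀ k t, 0 < f k t) {J : Set ℝ} (hJ : IsCompact J) (hne : J.Nonempty) :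
    ∃ c, 0 < c ∧ ∀ k, ∀ t ∈ J, c ≤ f k t := by
  have h : ∀ k : Fin N, ∃ c, 0 < c ∧ ∀ t ∈ J, c ≤ f k t := fun k => by
    obtain ⟨x, hxJ, hx⟩ := hJ.exists_isMinOn hne (hf k).continuousOn
    exact ⟨f k x, hpos k x, fun t ht => hx ht⟩
  choose c hc0 hc using h
  haveI : Nonempty (Fin N) := ⟨⟨0, hN⟩⟩
  refine ⟨Finset.univ.inf' Finset.univ_nonempty c, ?_, fun k t ht => ?_⟩
  · exact (Finset.lt_inf'_iff _).2 fun k _ => hc0 k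
  · exact (Finset.inf'_le c (Finset.mem_univ k)).trans (hc k t ht)

lemma integrable_master {β : ℝ} (hβ : 0 < β) (c : ℝ) :
    Integrable (fun a : ℝ => c * ((1 + a ^ 2) ^ 2 * Real.exp (-β * a ^ 2))) := by
  have h0 : Integrable (fun a : ℝ => Real.exp (-β * a ^ 2)) := integrable_exp_neg_mul_sq hβ
  have h2 : Integrable (fun a : ℝ => a ^ 2 * Real.exp (-β * a ^ 2)) := by
    have h := integrable_rpow_mul_exp_neg_mul_sq hβ (by norm_num : (-1:ℝ) < 2)
    rw [show ((2:ℝ)) = ((2:ℕ):ℝ) by norm_num] at h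
    simp_rw [Real.rpow_natCast] at h
    exact h
  have h4 : Integrable (fun a : ℝ => a ^ 4 * Real.exp (-β * a ^ 2)) := by
    have h := integrable_rpow_mul_exp_neg_mul_sq hβ (by norm_num : (-1:ℝ) < 4)
    rw [show ((4:ℝ)) = ((4:ℕ):ℝ) by norm_num] at h
    simp_rw [Real.rpow_natCast] at h
    exact h
  have hrw : (fun a : ℝ => c * ((1 + a ^ 2) ^ 2 * Real.exp (-β * a ^ 2)))
      = fun a : ℝ => c * (Real.exp (-β * a ^ 2) + 2 * (a ^ 2 * Real.exp (-β * a ^ 2))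
          + a ^ 4 * Real.exp (-β * a ^ 2)) := funext fun a => by ring
  rw [hrw]
  exact ((h0.add (h2.const_mul 2)).add h4).const_mul c

/-! ### Mixture-level lemmas -/

/-- `t`-derivative of the mixture curve. -/
noncomputable def mD {N : ℕ} (μc σc wc : Fin N → ℝ → ℝ) (t a : ℝ) : ℝ :=
  ∑ k, (deriv (wc k) t * gpdf (μc k t) (σc k t) a
    + wc k t * gD (μc k t) (σc k t) (deriv (μc k) t) (deriv (σc k) t) a)

lemma mcurve_pos {N : ℕ} (hN : 1 ≤ N) (μc σc wc : Fin N → ℝ → ℝ)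
    (hσpos : ∀ k t, 0 < σc k t) (hwpos : ∀ k t, 0 < wc k t) (t a : ℝ) :
    0 < mcurve μc σc wc t a :=
  Finset.sum_pos (fun k _ => mul_pos (hwpos k t) (gpdf_pos (hσpos k t) _ _))
    ⟨⟨0, hN⟩, Finset.mem_univ _⟩

lemma continuous_mcurve {N : ℕ} (μc σc wc : Fin N → ℝ → ℝ) (t : ℝ) :
    Continuous (fun a => mcurve μc σc wc t a) := by
  unfold mcurve
  exact continuous_finset_sum _ fun k _ => continuous_const.mul (continuous_gpdf _ _)

lemma continuous_gD_a (μ σ μ' σ' : ℝ) : Continuous (fun a => gD μ σ μ' σ' a) := by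
  unfold gD
  refine (continuous_gpdf μ σ).mul ?_
  have c2 : Continuous fun a : ℝ => (a - μ) * μ' / σ ^ 2 :=
    ((continuous_id.sub continuous_const).mul continuous_const).div_const _
  have c3 : Continuous fun a : ℝ => (a - μ) ^ 2 * σ' / σ ^ 3 :=
    (((continuous_id.sub continuous_const).pow 2).mul continuous_const).div_const _
  exact (continuous_const.add c2).add c3

lemma continuous_mD {N : ℕ} (μc σc wc : Fin N → ℝ → ℝ) (t : ℝ) :
    Continuous (fun a => mD μc σc wc t a) := by
  unfold mD
  exact continuous_finset_sum _ fun k _ =>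
    (continuous_const.mul (continuous_gpdf _ _)).add
      (continuous_const.mul (continuous_gD_a _ _ _ _))

lemma hasDerivAt_mcurve {N : ℕ} (μc σc wc : Fin N → ℝ → ℝ)
    (hμ : ∀ k, ContDiff ℝ 1 (μc k)) (hσ : ∀ k, ContDiff ℝ 1 (σc k))
    (hw : ∀ k, ContDiff ℝ 1 (wc k)) (hσpos : ∀ k t, 0 < σc k t) (t a : ℝ) :
    HasDerivAt (fun u => mcurve μc σc wc u a) (mD μc σc wc t a) t := by
  unfold mcurve mD
  apply HasDerivAt.fun_sum
  intro k _
  have hwk : HasDerivAt (wc k) (deriv (wc k) t) t :=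
    (((hw k).differentiable one_ne_zero) t).hasDerivAt
  have hμk : HasDerivAt (μc k) (deriv (μc k) t) t :=
    (((hμ k).differentiable one_ne_zero) t).hasDerivAt
  have hσk : HasDerivAt (σc k) (deriv (σc k) t) t :=
    (((hσ k).differentiable one_ne_zero) t).hasDerivAt
  exact hwk.mul (hasDerivAt_gpdf_comp hμk hσk (hσpos k) a)

lemma integral_mcurve {N : ℕ} (μc σc wc : Fin N → ℝ → ℝ)
    (hσpos : ∀ k t, 0 < σc k t) (hwsum : ∀ t, (∑ k, wc k t) = 1) (t : ℝ) :
    ∫ a, mcurve μc σc wc t a = 1 := by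
  unfold mcurve
  rw [integral_finset_sum _ fun k _ => (integrable_gpdf (μc k t) (σc k t)).const_mul _]
  have h : ∀ k : Fin N, ∫ a, wc k t * gpdf (μc k t) (σc k t) a = wc k t := fun k => by
    rw [integral_const_mul, integral_gpdf (hσpos k t), mul_one]
  simp_rw [h]
  exact hwsum t

set_option maxHeartbeats 2000000 in
lemma key {N : ℕ} (hN : 1 ≤ N) (μc σc wc : Fin N → ℝ → ℝ)
    (hμ : ∀ k, ContDiff ℝ 1 (μc k)) (hσ : ∀ k, ContDiff ℝ 1 (σc k))
    (hw : ∀ k, ContDiff ℝ 1 (wc k))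
    (hσpos : ∀ k t, 0 < σc k t) (hwpos : ∀ k t, 0 < wc k t)
    (hwsum : ∀ t, (∑ k, wc k t) = 1) (t₀ : ℝ) :
    Integrable (fun a => mcurve μc σc wc t₀ a * Real.log (mcurve μc σc wc t₀ a)) ∧
    HasDerivAt (fun t => ∫ a, mcurve μc σc wc t a * Real.log (mcurve μc σc wc t a))
      (∫ a, mD μc σc wc t₀ a * (Real.log (mcurve μc σc wc t₀ a) + 1)) t₀ ∧
    Integrable (fun a => mD μc σc wc t₀ a * Real.log (mcurve μc σc wc t₀ a)) ∧
    Integrable (fun a => mD μc σc wc t₀ a) ∧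
    (∫ a, mD μc σc wc t₀ a) = 0 := by
  have hJc : IsCompact (Set.Icc (t₀ - 1) (t₀ + 1)) := isCompact_Icc
  set J := Set.Icc (t₀ - 1) (t₀ + 1) with hJdef
  have hJne : J.Nonempty := ⟨t₀, by constructor <;> linarith⟩
  have ht₀J : t₀ ∈ J := ⟨by linarith, by linarith⟩
  have hball : Metric.ball t₀ 1 ⊆ J := fun x hx => by
    rw [Metric.mem_ball, Real.dist_eq] at hx
    have h := abs_lt.1 hx
    exact ⟨by linarith [h.1], by linarith [h.2]⟩
  obtain ⟨S, hS0, hSb⟩ := bdd_family σc (fun k => (hσ k).continuous) hJc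
  obtain ⟨M, hM0, hMb⟩ := bdd_family μc (fun k => (hμ k).continuous) hJc
  obtain ⟨W', hW'0, hW'b⟩ := bdd_family (fun k => deriv (wc k))
    (fun k => (hw k).continuous_deriv le_rfl) hJc
  obtain ⟨M', hM'0, hM'b⟩ := bdd_family (fun k => deriv (μc k))
    (fun k => (hμ k).continuous_deriv le_rfl) hJc
  obtain ⟨S', hS'0, hS'b⟩ := bdd_family (fun k => deriv (σc k))
    (fun k => (hσ k).continuous_deriv le_rfl) hJc
  obtain ⟨s, hs0, hsb⟩ := pos_lb_family hN σc (fun k => (hσ k).continuous) hσpos hJc hJne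
  obtain ⟨wm, hwm0, hwmb⟩ := pos_lb_family hN wc (fun k => (hw k).continuous) hwpos hJc hJne
  have hσS : ∀ k, ∀ t ∈ J, σc k t ≤ S := fun k t ht => (le_abs_self _).trans (hSb k t ht)
  have hSpos : 0 < S := hs0.trans_le ((hsb ⟨0, hN⟩ t₀ ht₀J).trans (hσS ⟨0, hN⟩ t₀ ht₀J))
  have hβ : 0 < (4 * S ^ 2)⁻¹ := by positivity
  set C₁ := (Real.sqrt (2 * π) * s)⁻¹ * Real.exp (M ^ 2 / (2 * S ^ 2)) with hC₁def
  have hC₁pos : 0 < C₁ := by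
    rw [hC₁def]
    exact mul_pos (inv_pos.2 (mul_pos (Real.sqrt_pos.2 (by positivity : (0:ℝ) < 2 * π)) hs0))
      (Real.exp_pos _)
  have hD0aux : (0:ℝ) ≤ S' / s + (1 + M) * M' / s ^ 2 + (2 + 2 * M ^ 2) * S' / s ^ 3 := by
    have h1 : (0:ℝ) ≤ S' / s := div_nonneg hS'0 hs0.le
    have h2 : (0:ℝ) ≤ (1 + M) * M' / s ^ 2 :=
      div_nonneg (mul_nonneg (by linarith : (0:ℝ) ≤ 1 + M) hM'0) (sq_nonneg s)
    have h3 : (0:ℝ) ≤ (2 + 2 * M ^ 2) * S' / s ^ 3 :=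
      div_nonneg (mul_nonneg (by nlinarith [sq_nonneg M] : (0:ℝ) ≤ 2 + 2 * M ^ 2) hS'0)
        (pow_nonneg hs0.le 3)
    linarith
  set D := S' / s + (1 + M) * M' / s ^ 2 + (2 + 2 * M ^ 2) * S' / s ^ 3 with hDdef
  have hD0 : 0 ≤ D := hD0aux
  set c₀ := wm * (Real.sqrt (2 * π) * S)⁻¹ with hc₀def
  have hc₀pos : 0 < c₀ := by
    rw [hc₀def]
    exact mul_pos hwm0 (inv_pos.2 (mul_pos (Real.sqrt_pos.2 (by positivity : (0:ℝ) < 2 * π))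
      hSpos))
  set A := |Real.log C₁| + |Real.log c₀| + M ^ 2 / s ^ 2 with hAdef
  have hA0 : 0 ≤ A := by
    rw [hAdef]
    have := abs_nonneg (Real.log C₁)
    have := abs_nonneg (Real.log c₀)
    have : (0:ℝ) ≤ M ^ 2 / s ^ 2 := div_nonneg (sq_nonneg M) (sq_nonneg s)
    linarith
  set B := (s ^ 2)⁻¹ with hBdef
  have hB0 : 0 < B := by rw [hBdef]; exact inv_pos.2 (pow_pos hs0 2)
  set K₁ := (N : ℝ) * (W' * C₁ + C₁ * D) with hK₁def
  have hK₁0 : 0 ≤ K₁ := by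
    rw [hK₁def]
    exact mul_nonneg (Nat.cast_nonneg N)
      (add_nonneg (mul_nonneg hW'0 hC₁pos.le) (mul_nonneg hC₁pos.le hD0))
  have hw1 : ∀ k t, wc k t ≤ 1 := fun k t => by
    calc wc k t ≤ ∑ j, wc j t :=
          Finset.single_le_sum (fun j _ => (hwpos j t).le) (Finset.mem_univ k)
      _ = 1 := hwsum t
  have mpos : ∀ t a, 0 < mcurve μc σc wc t a := mcurve_pos hN μc σc wc hσpos hwpos
  -- pointwise bounds
  have fact1 : ∀ k, ∀ t ∈ J, ∀ a, gpdf (μc k t) (σc k t) a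
      ≤ C₁ * Real.exp (-(4 * S ^ 2)⁻¹ * a ^ 2) := fun k t ht a => by
    rw [hC₁def]
    exact gpdf_le_envelope hs0 (hsb k t ht) (hσS k t ht) (hMb k t ht) a
  have fact2 : ∀ t ∈ J, ∀ a, mcurve μc σc wc t a
      ≤ C₁ * Real.exp (-(4 * S ^ 2)⁻¹ * a ^ 2) := by
    intro t ht a
    unfold mcurve
    calc ∑ k, wc k t * gpdf (μc k t) (σc k t) a
        ≤ ∑ k, wc k t * (C₁ * Real.exp (-(4 * S ^ 2)⁻¹ * a ^ 2)) :=
          Finset.sum_le_sum fun k _ => mul_le_mul_of_nonneg_left (fact1 k t ht a) (hwpos k t).le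
      _ = (∑ k, wc k t) * (C₁ * Real.exp (-(4 * S ^ 2)⁻¹ * a ^ 2)) := (Finset.sum_mul _ _ _).symm
      _ = C₁ * Real.exp (-(4 * S ^ 2)⁻¹ * a ^ 2) := by rw [hwsum t, one_mul]
  have hexple1 : ∀ a : ℝ, Real.exp (-(4 * S ^ 2)⁻¹ * a ^ 2) ≤ 1 := fun a =>
    Real.exp_le_one_iff.2 (by nlinarith [mul_nonneg hβ.le (sq_nonneg a)])
  have fact2' : ∀ t ∈ J, ∀ a, mcurve μc σc wc t a ≤ C₁ := fun t ht a =>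
    (fact2 t ht a).trans (by nlinarith [hexple1 a, hC₁pos, Real.exp_pos (-(4 * S ^ 2)⁻¹ * a ^ 2)])
  have fact3 : ∀ t ∈ J, ∀ a,
      c₀ * Real.exp (-(M ^ 2 / s ^ 2) + -(s ^ 2)⁻¹ * a ^ 2) ≤ mcurve μc σc wc t a := by
    intro t ht a
    have h1 : (Real.sqrt (2 * π) * S)⁻¹ * Real.exp (-(M ^ 2 / s ^ 2) + -(s ^ 2)⁻¹ * a ^ 2)
        ≤ gpdf (μc ⟨0, hN⟩ t) (σc ⟨0, hN⟩ t) a :=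
      gpdf_ge_envelope hs0 (hsb _ t ht) (hσS _ t ht) (hMb _ t ht) a
    have h2 : wc ⟨0, hN⟩ t * gpdf (μc ⟨0, hN⟩ t) (σc ⟨0, hN⟩ t) a ≤ mcurve μc σc wc t a :=
      Finset.single_le_sum (f := fun k => wc k t * gpdf (μc k t) (σc k t) a)
        (fun k _ => (mul_pos (hwpos k t) (gpdf_pos (hσpos k t) _ _)).le) (Finset.mem_univ _)
    calc c₀ * Real.exp (-(M ^ 2 / s ^ 2) + -(s ^ 2)⁻¹ * a ^ 2)
        = wm * ((Real.sqrt (2 * π) * S)⁻¹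
            * Real.exp (-(M ^ 2 / s ^ 2) + -(s ^ 2)⁻¹ * a ^ 2)) := by rw [hc₀def]; ring
      _ ≤ wc ⟨0, hN⟩ t * gpdf (μc ⟨0, hN⟩ t) (σc ⟨0, hN⟩ t) a :=
          mul_le_mul (hwmb _ t ht) h1
            (mul_nonneg (inv_nonneg.2 (mul_nonneg (Real.sqrt_nonneg _) hSpos.le))
              (Real.exp_pos _).le) (hwpos _ t).le
      _ ≤ mcurve μc σc wc t a := h2
  have fact4 : ∀ t ∈ J, ∀ a, |Real.log (mcurve μc σc wc t a)| ≤ A + B * a ^ 2 := by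
    intro t ht a
    rw [abs_le]
    constructor
    · have h1 := Real.log_le_log (mul_pos hc₀pos (Real.exp_pos _)) (fact3 t ht a)
      rw [Real.log_mul hc₀pos.ne' (Real.exp_pos _).ne', Real.log_exp] at h1
      rw [hAdef, hBdef]
      have h2 := neg_abs_le (Real.log c₀)
      have h3 := abs_nonneg (Real.log C₁)
      linarith
    · have h1 := Real.log_le_log (mpos t a) (fact2' t ht a)
      rw [hAdef, hBdef]
      have h2 := le_abs_self (Real.log C₁)
      have h3 := abs_nonneg (Real.log c₀)
      have h4 : 0 ≤ (s ^ 2)⁻¹ * a ^ 2 := mul_nonneg (by positivity) (sq_nonneg a)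
      have h5 : 0 ≤ M ^ 2 / s ^ 2 := div_nonneg (sq_nonneg M) (sq_nonneg s)
      linarith
  have fact5 : ∀ t ∈ J, ∀ a, |mD μc σc wc t a|
      ≤ K₁ * ((1 + a ^ 2) * Real.exp (-(4 * S ^ 2)⁻¹ * a ^ 2)) := by
    intro t ht a
    have hexp0 : (0:ℝ) < Real.exp (-(4 * S ^ 2)⁻¹ * a ^ 2) := Real.exp_pos _
    have ha2 : (0:ℝ) ≤ a ^ 2 := sq_nonneg a
    have hterm : ∀ k : Fin N, |deriv (wc k) t * gpdf (μc k t) (σc k t) a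
        + wc k t * gD (μc k t) (σc k t) (deriv (μc k) t) (deriv (σc k) t) a|
        ≤ (W' * C₁ + C₁ * D) * ((1 + a ^ 2) * Real.exp (-(4 * S ^ 2)⁻¹ * a ^ 2)) := by
      intro k
      have e1 : |deriv (wc k) t * gpdf (μc k t) (σc k t) a|
          ≤ W' * (C₁ * Real.exp (-(4 * S ^ 2)⁻¹ * a ^ 2)) := by
        rw [abs_mul, abs_of_pos (gpdf_pos (hσpos k t) _ _)]
        exact mul_le_mul (hW'b k t ht) (fact1 k t ht a) (gpdf_pos (hσpos k t) _ _).le hW'0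
      have e2 : |wc k t * gD (μc k t) (σc k t) (deriv (μc k) t) (deriv (σc k) t) a|
          ≤ 1 * (C₁ * (D * ((1 + a ^ 2) * Real.exp (-(4 * S ^ 2)⁻¹ * a ^ 2)))) := by
        rw [abs_mul, abs_of_pos (hwpos k t)]
        refine mul_le_mul (hw1 k t) ?_ (abs_nonneg _) one_pos.le
        rw [hC₁def, hDdef]
        exact gD_abs_le hs0 (hsb k t ht) (hσS k t ht) (hMb k t ht) (hM'b k t ht) (hS'b k t ht) a
      calc |deriv (wc k) t * gpdf (μc k t) (σc k t) a
            + wc k t * gD (μc k t) (σc k t) (deriv (μc k) t) (deriv (σc k) t) a|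
          ≤ |deriv (wc k) t * gpdf (μc k t) (σc k t) a|
            + |wc k t * gD (μc k t) (σc k t) (deriv (μc k) t) (deriv (σc k) t) a| := abs_add_le _ _
        _ ≤ W' * (C₁ * Real.exp (-(4 * S ^ 2)⁻¹ * a ^ 2))
            + 1 * (C₁ * (D * ((1 + a ^ 2) * Real.exp (-(4 * S ^ 2)⁻¹ * a ^ 2)))) :=
            add_le_add e1 e2
        _ ≤ (W' * C₁ + C₁ * D) * ((1 + a ^ 2) * Real.exp (-(4 * S ^ 2)⁻¹ * a ^ 2)) := by
            nlinarith [mul_nonneg (mul_nonneg (mul_nonneg hW'0 hC₁pos.le) hexp0.le) ha2]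
    calc |mD μc σc wc t a|
        ≤ ∑ k : Fin N, |deriv (wc k) t * gpdf (μc k t) (σc k t) a
            + wc k t * gD (μc k t) (σc k t) (deriv (μc k) t) (deriv (σc k) t) a| :=
          Finset.abs_sum_le_sum_abs _ _
      _ ≤ ∑ _k : Fin N, (W' * C₁ + C₁ * D)
            * ((1 + a ^ 2) * Real.exp (-(4 * S ^ 2)⁻¹ * a ^ 2)) :=
          Finset.sum_le_sum fun k _ => hterm k
      _ = K₁ * ((1 + a ^ 2) * Real.exp (-(4 * S ^ 2)⁻¹ * a ^ 2)) := by
          rw [Finset.sum_const, Finset.card_univ, Fintype.card_fin, nsmul_eq_mul, hK₁def]; ring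
  have hE0 : ∀ a : ℝ, (0:ℝ) < Real.exp (-(4 * S ^ 2)⁻¹ * a ^ 2) := fun a => Real.exp_pos _
  have h1a : ∀ a : ℝ, (0:ℝ) ≤ 1 + a ^ 2 := fun a => by nlinarith [sq_nonneg a]
  have fact5' : ∀ t ∈ J, ∀ a, |mD μc σc wc t a|
      ≤ K₁ * ((1 + a ^ 2) ^ 2 * Real.exp (-(4 * S ^ 2)⁻¹ * a ^ 2)) := by
    intro t ht a
    refine (fact5 t ht a).trans ?_
    nlinarith [mul_nonneg (mul_nonneg (mul_nonneg hK₁0 (hE0 a).le) (sq_nonneg a)) (h1a a)]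
  have fact6 : ∀ t ∈ J, ∀ a, |mD μc σc wc t a * (Real.log (mcurve μc σc wc t a) + 1)|
      ≤ (K₁ * (A + 1 + B)) * ((1 + a ^ 2) ^ 2 * Real.exp (-(4 * S ^ 2)⁻¹ * a ^ 2)) := by
    intro t ht a
    rw [abs_mul]
    have h1 : |Real.log (mcurve μc σc wc t a) + 1| ≤ A + 1 + B * a ^ 2 := by
      have h2 := fact4 t ht a
      calc |Real.log (mcurve μc σc wc t a) + 1|
          ≤ |Real.log (mcurve μc σc wc t a)| + |(1:ℝ)| := abs_add_le _ _
        _ ≤ A + 1 + B * a ^ 2 := by rw [abs_one]; linarith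
    calc |mD μc σc wc t a| * |Real.log (mcurve μc σc wc t a) + 1|
        ≤ (K₁ * ((1 + a ^ 2) * Real.exp (-(4 * S ^ 2)⁻¹ * a ^ 2))) * (A + 1 + B * a ^ 2) :=
          mul_le_mul (fact5 t ht a) h1 (abs_nonneg _)
            (mul_nonneg hK₁0 (mul_nonneg (h1a a) (hE0 a).le))
      _ ≤ (K₁ * (A + 1 + B)) * ((1 + a ^ 2) ^ 2 * Real.exp (-(4 * S ^ 2)⁻¹ * a ^ 2)) := by
          nlinarith [mul_nonneg (mul_nonneg (mul_nonneg hK₁0 (hE0 a).le) (h1a a)) hB0.le,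
            mul_nonneg (mul_nonneg (mul_nonneg (mul_nonneg hK₁0 (hE0 a).le) (h1a a))
              (by linarith : (0:ℝ) ≤ A + 1)) (sq_nonneg a)]
  have fact7 : ∀ t ∈ J, ∀ a, |mcurve μc σc wc t a * Real.log (mcurve μc σc wc t a)|
      ≤ (C₁ * (A + B)) * ((1 + a ^ 2) ^ 2 * Real.exp (-(4 * S ^ 2)⁻¹ * a ^ 2)) := by
    intro t ht a
    rw [abs_mul, abs_of_pos (mpos t a)]
    calc mcurve μc σc wc t a * |Real.log (mcurve μc σc wc t a)|
        ≤ (C₁ * Real.exp (-(4 * S ^ 2)⁻¹ * a ^ 2)) * (A + B * a ^ 2) :=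
          mul_le_mul (fact2 t ht a) (fact4 t ht a) (abs_nonneg _)
            (mul_nonneg hC₁pos.le (hE0 a).le)
      _ ≤ (C₁ * (A + B)) * ((1 + a ^ 2) ^ 2 * Real.exp (-(4 * S ^ 2)⁻¹ * a ^ 2)) := by
          nlinarith [mul_nonneg (mul_nonneg hC₁pos.le (hE0 a).le) hB0.le,
            mul_nonneg (mul_nonneg (mul_nonneg hC₁pos.le (hE0 a).le)
              (by linarith : (0:ℝ) ≤ 2 * A + B)) (sq_nonneg a),
            mul_nonneg (mul_nonneg (mul_nonneg hC₁pos.le (hE0 a).le)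
              (by linarith : (0:ℝ) ≤ A + B)) (sq_nonneg (a ^ 2))]
  have fact8 : ∀ t ∈ J, ∀ a, |mD μc σc wc t a * Real.log (mcurve μc σc wc t a)|
      ≤ (K₁ * (A + B)) * ((1 + a ^ 2) ^ 2 * Real.exp (-(4 * S ^ 2)⁻¹ * a ^ 2)) := by
    intro t ht a
    rw [abs_mul]
    calc |mD μc σc wc t a| * |Real.log (mcurve μc σc wc t a)|
        ≤ (K₁ * ((1 + a ^ 2) * Real.exp (-(4 * S ^ 2)⁻¹ * a ^ 2))) * (A + B * a ^ 2) :=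
          mul_le_mul (fact5 t ht a) (fact4 t ht a) (abs_nonneg _)
            (mul_nonneg hK₁0 (mul_nonneg (h1a a) (hE0 a).le))
      _ ≤ (K₁ * (A + B)) * ((1 + a ^ 2) ^ 2 * Real.exp (-(4 * S ^ 2)⁻¹ * a ^ 2)) := by
          nlinarith [mul_nonneg (mul_nonneg (mul_nonneg hK₁0 (hE0 a).le) (h1a a)) hB0.le,
            mul_nonneg (mul_nonneg (mul_nonneg (mul_nonneg hK₁0 (hE0 a).le) (h1a a)) hA0)
              (sq_nonneg a)]
  -- measurability
  have measF : ∀ t, AEStronglyMeasurable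
      (fun a => mcurve μc σc wc t a * Real.log (mcurve μc σc wc t a)) volume := fun t =>
    ((continuous_mcurve μc σc wc t).mul
      ((continuous_mcurve μc σc wc t).log fun a => (mpos t a).ne')).aestronglyMeasurable
  have intF : ∀ t ∈ J, Integrable
      (fun a => mcurve μc σc wc t a * Real.log (mcurve μc σc wc t a)) := fun t ht =>
    (integrable_master hβ (C₁ * (A + B))).mono' (measF t)
      (Filter.Eventually.of_forall fun a => by rw [Real.norm_eq_abs]; exact fact7 t ht a)
  have measF' : AEStronglyMeasurable
      (fun a => mD μc σc wc t₀ a * (Real.log (mcurve μc σc wc t₀ a) + 1)) volume :=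
    ((continuous_mD μc σc wc t₀).mul
      (((continuous_mcurve μc σc wc t₀).log fun a => (mpos t₀ a).ne').add
        continuous_const)).aestronglyMeasurable
  have hdF : ∀ (x : ℝ) (a : ℝ), HasDerivAt
      (fun t => mcurve μc σc wc t a * Real.log (mcurve μc σc wc t a))
      (mD μc σc wc x a * (Real.log (mcurve μc σc wc x a) + 1)) x := by
    intro x a
    have h1 := hasDerivAt_mcurve μc σc wc hμ hσ hw hσpos x a
    have h2 := h1.fun_mul (h1.log (mpos x a).ne')
    refine h2.congr_deriv ?_
    rw [mul_comm (mcurve μc σc wc x a), div_mul_cancel₀ _ (mpos x a).ne']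
    ring
  have happ1 := hasDerivAt_integral_of_dominated_loc_of_deriv_le (μ := volume) (s := Metric.ball t₀ 1)
    (F := fun t a => mcurve μc σc wc t a * Real.log (mcurve μc σc wc t a))
    (F' := fun t a => mD μc σc wc t a * (Real.log (mcurve μc σc wc t a) + 1))
    (bound := fun a => (K₁ * (A + 1 + B))
      * ((1 + a ^ 2) ^ 2 * Real.exp (-(4 * S ^ 2)⁻¹ * a ^ 2)))
    (x₀ := t₀) (Metric.ball_mem_nhds t₀ zero_lt_one)
    (Filter.Eventually.of_forall fun t => measF t)
    (intF t₀ ht₀J)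
    measF'
    (Filter.Eventually.of_forall fun a t htb => by
      rw [Real.norm_eq_abs]; exact fact6 t (hball htb) a)
    (integrable_master hβ _)
    (Filter.Eventually.of_forall fun a t htb => hdF t a)
  have intM : ∀ t ∈ J, Integrable (fun a => mcurve μc σc wc t a) := fun t ht =>
    (integrable_master hβ C₁).mono' (continuous_mcurve μc σc wc t).aestronglyMeasurable
      (Filter.Eventually.of_forall fun a => by
        rw [Real.norm_eq_abs, abs_of_pos (mpos t a)]
        refine (fact2 t ht a).trans ?_
        nlinarith [mul_nonneg (mul_nonneg hC₁pos.le (hE0 a).le) (sq_nonneg a),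
          mul_nonneg (mul_nonneg hC₁pos.le (hE0 a).le) (sq_nonneg (a ^ 2))])
  have happ2 := hasDerivAt_integral_of_dominated_loc_of_deriv_le (μ := volume) (s := Metric.ball t₀ 1)
    (F := fun t a => mcurve μc σc wc t a)
    (F' := fun t a => mD μc σc wc t a)
    (bound := fun a => K₁ * ((1 + a ^ 2) ^ 2 * Real.exp (-(4 * S ^ 2)⁻¹ * a ^ 2)))
    (x₀ := t₀) (Metric.ball_mem_nhds t₀ zero_lt_one)
    (Filter.Eventually.of_forall fun t => (continuous_mcurve μc σc wc t).aestronglyMeasurable)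
    (intM t₀ ht₀J)
    (continuous_mD μc σc wc t₀).aestronglyMeasurable
    (Filter.Eventually.of_forall fun a t htb => by
      rw [Real.norm_eq_abs]; exact fact5' t (hball htb) a)
    (integrable_master hβ _)
    (Filter.Eventually.of_forall fun a t htb => hasDerivAt_mcurve μc σc wc hμ hσ hw hσpos t a)
  have hconst : (fun t => ∫ a, mcurve μc σc wc t a) = fun _ => (1:ℝ) :=
    funext fun t => integral_mcurve μc σc wc hσpos hwsum t
  have hz : (∫ a, mD μc σc wc t₀ a) = 0 := by
    have h := happ2.2
    rw [hconst] at h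
    exact h.unique (hasDerivAt_const t₀ 1)
  have intMDlog : Integrable (fun a => mD μc σc wc t₀ a * Real.log (mcurve μc σc wc t₀ a)) :=
    (integrable_master hβ (K₁ * (A + B))).mono'
      ((continuous_mD μc σc wc t₀).mul
        ((continuous_mcurve μc σc wc t₀).log fun a => (mpos t₀ a).ne')).aestronglyMeasurable
      (Filter.Eventually.of_forall fun a => by rw [Real.norm_eq_abs]; exact fact8 t₀ ht₀J a)
  exact ⟨intF t₀ ht₀J, happ1.2, intMDlog, happ2.1, hz⟩

/-- along a smooth curve of Gaussian mixtures, the differential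
entropy `H(t) = −∫ m_t(a)·log m_t(a) da` is finite (the integrand is
integrable), `t ↦ H(t)` is differentiable, and
`H′(t₀) = −∫ (∂m_t(a)/∂t)|_{t=t₀} · log m_{t₀}(a) da`. -/
theorem stmt9 (N : ℕ) (hN : 1 ≤ N) (μc σc wc : Fin N → ℝ → ℝ)
    (hμ : ∀ k, ContDiff ℝ 1 (μc k)) (hσ : ∀ k, ContDiff ℝ 1 (σc k))
    (hw : ∀ k, ContDiff ℝ 1 (wc k))
    (hσpos : ∀ k t, 0 < σc k t) (hwpos : ∀ k t, 0 < wc k t)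
    (hwsum : ∀ t, (∑ k, wc k t) = 1) :
    (∀ t : ℝ, Integrable (fun a => mcurve μc σc wc t a * Real.log (mcurve μc σc wc t a))) ∧
    Differentiable ℝ (fun t => -∫ a, mcurve μc σc wc t a * Real.log (mcurve μc σc wc t a)) ∧
    ∀ t₀ : ℝ,
      deriv (fun t => -∫ a, mcurve μc σc wc t a * Real.log (mcurve μc σc wc t a)) t₀
        = -∫ a, deriv (fun t => mcurve μc σc wc t a) t₀ * Real.log (mcurve μc σc wc t₀ a) := by
  refine ⟨fun t => (key hN μc σc wc hμ hσ hw hσpos hwpos hwsum t).1, ?_, ?_⟩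
  · intro t₀
    exact ((key hN μc σc wc hμ hσ hw hσpos hwpos hwsum t₀).2.1.neg).differentiableAt
  · intro t₀
    obtain ⟨intF, hD, intML, intMD, hz⟩ := key hN μc σc wc hμ hσ hw hσpos hwpos hwsum t₀
    rw [hD.fun_neg.deriv]
    have e1 : (fun a => deriv (fun t => mcurve μc σc wc t a) t₀ * Real.log (mcurve μc σc wc t₀ a))
        = fun a => mD μc σc wc t₀ a * Real.log (mcurve μc σc wc t₀ a) :=
      funext fun a => by rw [(hasDerivAt_mcurve μc σc wc hμ hσ hw hσpos t₀ a).deriv]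
    have e2 : (fun a => mD μc σc wc t₀ a * (Real.log (mcurve μc σc wc t₀ a) + 1))
        = fun a => mD μc σc wc t₀ a * Real.log (mcurve μc σc wc t₀ a) + mD μc σc wc t₀ a :=
      funext fun a => by ring
    rw [e1]
    congr 1
    rw [e2, integral_add intML intMD, hz, add_zero]
end
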